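/- arXiv:1605.05828 — 2 statements merged into one kernel-verified Lean document; each statement's English description precedes it below -/
import Mathlib

section
/- The logarithmic energy of the standard semicircular law equals −1/4: if σ is the probability measure on ℝ with density x ↦ (1/(2π))·√(4 − x²) on [−2, 2] (and 0 elsewhere), then ∫∫ log|x − y| dσ(x)dσ(y) = −1/4; equivalently, the free entropy χ(σ) = ∫∫ log|x−y| dσdσ + 3/4 + (1/2)·log(2π) equals (1/2)·log(2πe). -/
open MeasureTheory Real

/-- The standard semicircular law: the measure on `ℝ` with density
`x ↦ (1/(2π))·√(4 - x²)` (which vanishes outside `[-2, 2]`). -/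
noncomputable def semicircleLaw : Measure ℝ :=
  (volume : Measure ℝ).withDensity
    (fun x => ENNReal.ofReal (1 / (2 * Real.pi) * Real.sqrt (4 - x ^ 2)))

namespace SemicircleProof

open Set Filter Topology intervalIntegral
open scoped ENNReal NNReal

noncomputable def rho (x : ℝ) : ℝ := 1 / (2 * Real.pi) * Real.sqrt (4 - x ^ 2)

lemma semicircleLaw_eq :
    semicircleLaw = (volume : Measure ℝ).withDensity (fun x => ENNReal.ofReal (rho x)) := rfl

/-! ### Integrability of log near 0 -/

lemma il_log01 : IntervalIntegrable Real.log volume 0 1 := by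
  have hrpow : IntervalIntegrable (fun x : ℝ => 2 * x ^ (-(2⁻¹) : ℝ)) volume 0 1 :=
    (intervalIntegral.intervalIntegrable_rpow' (by norm_num)).const_mul 2
  refine hrpow.mono_fun Real.measurable_log.aestronglyMeasurable ?_
  filter_upwards [ae_restrict_mem measurableSet_uIoc] with x hx
  rw [Set.uIoc_of_le (by norm_num : (0:ℝ) ≤ 1)] at hx
  obtain ⟨hx0, hx1⟩ := hx
  have hlogx : Real.log x ≤ 0 := Real.log_nonpos hx0.le hx1
  have h2 : Real.log (x ^ (-(2⁻¹) : ℝ)) = -(2⁻¹) * Real.log x := Real.log_rpow hx0 _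
  have h3 : Real.log (x ^ (-(2⁻¹) : ℝ)) ≤ x ^ (-(2⁻¹) : ℝ) - 1 :=
    Real.log_le_sub_one_of_pos (Real.rpow_pos_of_pos hx0 _)
  have h4 : (0:ℝ) < x ^ (-(2⁻¹) : ℝ) := Real.rpow_pos_of_pos hx0 _
  rw [Real.norm_eq_abs, abs_of_nonpos hlogx, Real.norm_eq_abs,
    abs_of_pos (by positivity : (0:ℝ) < 2 * x ^ (-(2⁻¹) : ℝ))]
  nlinarith

lemma il_log_right (c : ℝ) (hc : 0 ≤ c) : IntervalIntegrable Real.log volume 0 c := by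
  rcases le_total c 1 with h | h
  · refine il_log01.mono_set ?_
    rw [Set.uIcc_of_le hc, Set.uIcc_of_le (by norm_num : (0:ℝ) ≤ 1)]
    exact Set.Icc_subset_Icc le_rfl h
  · refine il_log01.trans (intervalIntegral.intervalIntegrable_log ?_)
    rw [Set.uIcc_of_le h]
    rintro ⟨h0, -⟩
    norm_num at h0

lemma il_logabs_right (c : ℝ) (hc : 0 ≤ c) :
    IntervalIntegrable (fun t => Real.log |t|) volume 0 c := by
  have h := il_log_right c hc
  rw [intervalIntegrable_iff, Set.uIoc_of_le hc] at h ⊢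
  exact h.congr_fun (fun t ht => by rw [abs_of_pos ht.1]) measurableSet_Ioc

lemma il_logabs (a b : ℝ) : IntervalIntegrable (fun t => Real.log |t|) volume a b := by
  have key : ∀ c : ℝ, IntervalIntegrable (fun t => Real.log |t|) volume 0 c := by
    intro c
    rcases le_total 0 c with h | h
    · exact il_logabs_right c h
    · have h2 := (IntervalIntegrable.iff_comp_neg (by simp)).mp (il_logabs_right (-c) (by linarith))
      simp only [neg_zero, neg_neg, abs_neg] at h2
      exact h2
  exact (key a).symm.trans (key b)

lemma il_logabs_shift (x a b : ℝ) :
    IntervalIntegrable (fun y => Real.log |x - y|) volume a b := by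
  have h := (il_logabs (x - a) (x - b)).comp_sub_left x
  simp only [sub_sub_cancel] at h
  exact h

/-! ### Integrability of log ∘ sin -/

lemma sin_ge_half {u : ℝ} (h0 : 0 < u) (h1 : u ≤ 1) : u / 2 ≤ Real.sin u := by
  have h := Real.sin_gt_sub_cube h0
  have h3 : u^3 ≤ u := by nlinarith [mul_nonneg (mul_nonneg h0.le (sub_nonneg.mpr h1)) (by linarith : (0:ℝ) ≤ 1 + u)]
  linarith

lemma il_logsin01 : IntervalIntegrable (fun u => Real.log (Real.sin u)) volume 0 1 := by
  have hg : IntervalIntegrable (fun u : ℝ => ‖Real.log u‖ + Real.log 2) volume 0 1 :=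
    (il_log_right 1 (by norm_num)).norm.add intervalIntegrable_const
  refine hg.mono_fun (Real.measurable_log.comp Real.measurable_sin).aestronglyMeasurable ?_
  filter_upwards [ae_restrict_mem measurableSet_uIoc] with u hu
  rw [Set.uIoc_of_le (by norm_num : (0:ℝ) ≤ 1)] at hu
  obtain ⟨hu1, hu2⟩ := hu
  have hs1 : Real.sin u ≤ 1 := Real.sin_le_one u
  have hs2 : u / 2 ≤ Real.sin u := sin_ge_half hu1 hu2
  have hpos : 0 < Real.sin u := lt_of_lt_of_le (by linarith) hs2
  have h2 : Real.log (u/2) ≤ Real.log (Real.sin u) := Real.log_le_log (by linarith) hs2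
  have h3 : Real.log (u/2) = Real.log u - Real.log 2 := Real.log_div hu1.ne' two_ne_zero
  have h4 : -|Real.log u| ≤ Real.log u := neg_abs_le _
  have h5 : ‖Real.log u‖ = |Real.log u| := Real.norm_eq_abs _
  rw [Real.norm_eq_abs (Real.log (Real.sin u)), abs_of_nonpos (Real.log_nonpos hpos.le hs1),
    Real.norm_eq_abs, abs_of_nonneg (by positivity : (0:ℝ) ≤ ‖Real.log u‖ + Real.log 2), h5]
  linarith

lemma il_logsin : IntervalIntegrable (fun u => Real.log (Real.sin u)) volume 0 π := by
  have hπ := Real.pi_gt_three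
  have hmid : IntervalIntegrable (fun u => Real.log (Real.sin u)) volume 1 (π - 1) := by
    apply ContinuousOn.intervalIntegrable
    apply ContinuousOn.log Real.continuous_sin.continuousOn
    intro u hu
    rw [Set.uIcc_of_le (by linarith)] at hu
    exact (Real.sin_pos_of_pos_of_lt_pi (by linarith [hu.1]) (by linarith [hu.2])).ne'
  have hend : IntervalIntegrable (fun u => Real.log (Real.sin u)) volume (π - 1) π := by
    have h2 := il_logsin01.comp_sub_left π
    have h3 : (fun x : ℝ => Real.log (Real.sin (π - x))) = fun x => Real.log (Real.sin x) :=
      funext fun x => by rw [Real.sin_pi_sub]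
    rw [h3] at h2
    simpa using h2.symm
  exact (il_logsin01.trans hmid).trans hend

lemma il_logabssin_base : IntervalIntegrable (fun u => Real.log |Real.sin u|) volume 0 π := by
  have h := il_logsin
  rw [intervalIntegrable_iff, Set.uIoc_of_le Real.pi_pos.le] at h ⊢
  exact h.congr_fun (fun u hu => by
    rw [abs_of_nonneg (Real.sin_nonneg_of_nonneg_of_le_pi hu.1.le hu.2)]) measurableSet_Ioc

lemma il_logabssin {a b : ℝ} (ha : |a| ≤ π) (hb : |b| ≤ π) :
    IntervalIntegrable (fun u => Real.log |Real.sin u|) volume a b := by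
  have key : ∀ c : ℝ, |c| ≤ π → IntervalIntegrable (fun u => Real.log |Real.sin u|) volume 0 c := by
    intro c hc
    rcases le_total 0 c with h | h
    · refine il_logabssin_base.mono_set ?_
      rw [Set.uIcc_of_le h, Set.uIcc_of_le Real.pi_pos.le]
      exact Set.Icc_subset_Icc le_rfl (by rwa [abs_of_nonneg h] at hc)
    · have h2 : IntervalIntegrable (fun u => Real.log |Real.sin u|) volume 0 (-c) := by
        refine il_logabssin_base.mono_set ?_
        rw [Set.uIcc_of_le (by linarith), Set.uIcc_of_le Real.pi_pos.le]
        exact Set.Icc_subset_Icc le_rfl (by rwa [abs_of_nonpos h] at hc)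
      have h3 := (IntervalIntegrable.iff_comp_neg (by simp)).mp h2
      simp only [neg_zero, neg_neg, Real.sin_neg, abs_neg] at h3
      exact h3
  exact (key a ha).symm.trans (key b hb)

lemma il_logabssin_mul {a b : ℝ} (ha : |a| ≤ π) (hb : |b| ≤ π) {g : ℝ → ℝ}
    (hg : Measurable g) (hbd : ∀ x, |g x| ≤ 1) :
    IntervalIntegrable (fun u => Real.log |Real.sin u| * g u) volume a b := by
  refine (il_logabssin ha hb).mono_fun
    ((Real.measurable_log.comp Real.continuous_sin.measurable.abs).mul hg).aestronglyMeasurable ?_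
  filter_upwards with u
  rw [Real.norm_eq_abs, Real.norm_eq_abs, abs_mul]
  calc abs (Real.log (abs (Real.sin u))) * abs (g u)
      ≤ abs (Real.log (abs (Real.sin u))) * 1 :=
        mul_le_mul_of_nonneg_left (hbd u) (abs_nonneg _)
    _ = abs (Real.log (abs (Real.sin u))) := mul_one _

lemma il_logsin_mul {b : ℝ} (hb0 : 0 ≤ b) (hb : b ≤ π) {g : ℝ → ℝ}
    (hg : Measurable g) (hbd : ∀ x, |g x| ≤ 1) :
    IntervalIntegrable (fun u => Real.log (Real.sin u) * g u) volume 0 b := by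
  refine (il_logabssin (by simpa using Real.pi_pos.le) (by rwa [abs_of_nonneg hb0])).mono_fun
    ((Real.measurable_log.comp Real.continuous_sin.measurable).mul hg).aestronglyMeasurable ?_
  filter_upwards [ae_restrict_mem measurableSet_uIoc] with u hu
  rw [Set.uIoc_of_le hb0] at hu
  have hsn : (0:ℝ) ≤ Real.sin u := Real.sin_nonneg_of_nonneg_of_le_pi hu.1.le (hu.2.trans hb)
  rw [Real.norm_eq_abs, Real.norm_eq_abs, abs_mul, abs_of_nonneg hsn]
  calc abs (Real.log (Real.sin u)) * abs (g u) ≤ abs (Real.log (Real.sin u)) * 1 :=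
        mul_le_mul_of_nonneg_left (hbd u) (abs_nonneg _)
    _ = abs (Real.log (Real.sin u)) := mul_one _

/-! ### The value ∫₀^π log(sin) = -π log 2 -/

lemma il_logsin_interval {a b : ℝ} (ha : 0 ≤ a) (ha' : a ≤ π) (hb : 0 ≤ b) (hb' : b ≤ π) :
    IntervalIntegrable (fun u => Real.log (Real.sin u)) volume a b := by
  refine il_logsin.mono_set ?_
  rw [Set.uIcc_of_le Real.pi_pos.le]
  exact Set.uIcc_subset_Icc ⟨ha, ha'⟩ ⟨hb, hb'⟩

lemma il_logcos : IntervalIntegrable (fun u => Real.log (Real.cos u)) volume 0 (π/2) := by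
  have h := il_logsin.comp_sub_left (π/2)
  simp only [Real.sin_pi_div_two_sub] at h
  refine h.mono_set ?_
  have h1 : π/2 - π ≤ 0 := by linarith [Real.pi_pos]
  rw [Set.uIcc_of_le (by linarith [Real.pi_pos] : (0:ℝ) ≤ π/2),
    Set.uIcc_of_ge (by linarith [Real.pi_pos] : π/2 - π ≤ π/2 - 0)]
  exact Set.Icc_subset_Icc (by linarith) (by linarith)

lemma integral_logsin_pi : ∫ u in (0:ℝ)..π, Real.log (Real.sin u) = -(π * Real.log 2) := by
  have hπ := Real.pi_pos
  set J := ∫ u in (0:ℝ)..(π/2), Real.log (Real.sin u) with hJdef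
  have hil1 : IntervalIntegrable (fun u => Real.log (Real.sin u)) volume 0 (π/2) :=
    il_logsin_interval le_rfl hπ.le (by linarith) (by linarith)
  have hil2 : IntervalIntegrable (fun u => Real.log (Real.sin u)) volume (π/2) π :=
    il_logsin_interval (by linarith) (by linarith) hπ.le le_rfl
  have hrefl : ∫ u in (π/2:ℝ)..π, Real.log (Real.sin u) = J := by
    have h := intervalIntegral.integral_comp_sub_left (a := (0:ℝ)) (b := π/2)
      (fun u => Real.log (Real.sin u)) π
    simp only [Real.sin_pi_sub] at h
    rw [show π - π/2 = π/2 by ring, sub_zero] at h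
    rw [← h]
  have hfull : ∫ u in (0:ℝ)..π, Real.log (Real.sin u) = 2 * J := by
    have hsplit := intervalIntegral.integral_add_adjacent_intervals hil1 hil2
    rw [← hsplit, hrefl, ← hJdef]; ring
  have hJcos : ∫ u in (0:ℝ)..(π/2), Real.log (Real.cos u) = J := by
    have h := intervalIntegral.integral_comp_sub_left (a := (0:ℝ)) (b := π/2)
      (fun u => Real.log (Real.sin u)) (π/2)
    simp only [Real.sin_pi_div_two_sub] at h
    rw [show π/2 - π/2 = (0:ℝ) by ring, sub_zero] at h
    rw [h]
  have hdbl : ∫ x in (0:ℝ)..(π/2), Real.log (Real.sin (2*x)) = J := by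
    have h := intervalIntegral.integral_comp_mul_left (a := (0:ℝ)) (b := π/2)
      (fun u => Real.log (Real.sin u)) (c := 2) two_ne_zero
    rw [show (2:ℝ)*0 = 0 by ring, show (2:ℝ)*(π/2) = π by ring] at h
    rw [h, hfull, smul_eq_mul]; ring
  have hsplit2 : ∫ x in (0:ℝ)..(π/2), Real.log (Real.sin (2*x))
      = ∫ x in (0:ℝ)..(π/2), (Real.log 2 + Real.log (Real.sin x) + Real.log (Real.cos x)) := by
    apply intervalIntegral.integral_congr_ae
    have hae : ∀ᵐ x : ℝ ∂volume, x ≠ π/2 := by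
      filter_upwards [compl_mem_ae_iff.mpr (measure_singleton (π/2 : ℝ))] with x hx
      simpa using hx
    filter_upwards [hae] with x hne hmem
    rw [Set.uIoc_of_le (by linarith : (0:ℝ) ≤ π/2)] at hmem
    have hx2 : x < π/2 := lt_of_le_of_ne hmem.2 hne
    have hsin : 0 < Real.sin x := Real.sin_pos_of_pos_of_lt_pi hmem.1 (by linarith)
    have hx1 : 0 < x := hmem.1
    have hcos : 0 < Real.cos x := Real.cos_pos_of_mem_Ioo ⟨by linarith [hmem.1], hx2⟩
    rw [Real.sin_two_mul, Real.log_mul (by positivity) hcos.ne',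
      Real.log_mul two_ne_zero hsin.ne']
  have hval : ∫ x in (0:ℝ)..(π/2), (Real.log 2 + Real.log (Real.sin x) + Real.log (Real.cos x))
      = π/2 * Real.log 2 + J + J := by
    rw [intervalIntegral.integral_add (intervalIntegrable_const.add hil1) il_logcos,
      intervalIntegral.integral_add intervalIntegrable_const hil1,
      intervalIntegral.integral_const, hJcos]
    simp only [smul_eq_mul, sub_zero]
    rw [← hJdef]
  have hJ : J = -(π/2 * Real.log 2) := by
    have := hdbl.symm.trans (hsplit2.trans hval)
    linarith
  rw [hfull, hJ]; ring


/-! ### Antiderivatives -/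

noncomputable def Phi (u : ℝ) : ℝ :=
  Real.log (Real.sin u) * (Real.sin (4*u)/4) - (u + Real.sin (2*u) + Real.sin (4*u)/4)/4

noncomputable def Psi (u : ℝ) : ℝ :=
  Real.log (Real.sin u) * (Real.sin (2*u)^2/2) + (Real.sin u^4 - 2*Real.sin u^2)/2

lemma hd_sin_mul (c u : ℝ) : HasDerivAt (fun x => Real.sin (c*x)) (c * Real.cos (c*u)) u := by
  have h := (Real.hasDerivAt_sin (c*u)).comp u ((hasDerivAt_id u).const_mul c)
  simpa [mul_comm, Function.comp_def] using h

lemma hd_logsin {u : ℝ} (h : Real.sin u ≠ 0) :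
    HasDerivAt (fun x => Real.log (Real.sin x)) (Real.cos u / Real.sin u) u := by
  have h2 := (Real.hasDerivAt_log h).comp u (Real.hasDerivAt_sin u)
  simpa [div_eq_inv_mul, Function.comp_def] using h2

lemma hd_Phi {u : ℝ} (h1 : 0 < u) (h2 : u < π) :
    HasDerivAt Phi (Real.log (Real.sin u) * Real.cos (4*u)) u := by
  have hs : 0 < Real.sin u := Real.sin_pos_of_pos_of_lt_pi h1 h2
  have d1 : HasDerivAt (fun x => Real.log (Real.sin x) * (Real.sin (4*x)/4))
      (Real.cos u / Real.sin u * (Real.sin (4*u)/4)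
        + Real.log (Real.sin u) * (4 * Real.cos (4*u)/4)) u :=
    (hd_logsin hs.ne').mul ((hd_sin_mul 4 u).div_const 4)
  have d2 : HasDerivAt (fun x => (x + Real.sin (2*x) + Real.sin (4*x)/4)/4)
      ((1 + 2 * Real.cos (2*u) + 4 * Real.cos (4*u)/4)/4) u :=
    (((hasDerivAt_id u).add (hd_sin_mul 2 u)).add ((hd_sin_mul 4 u).div_const 4)).div_const 4
  have key : Real.sin (4*u) * Real.cos u
      = Real.sin u * (1 + 2*Real.cos (2*u) + Real.cos (4*u)) := by
    rw [show (4:ℝ)*u = 2*(2*u) by ring, Real.sin_two_mul (2*u), Real.cos_two_mul (2*u),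
      Real.sin_two_mul u, Real.cos_two_mul u]
    ring
  have h3 := d1.sub d2
  refine h3.congr_deriv (Eq.symm ?_)
  have hne := hs.ne'
  field_simp
  rw [mul_comm u 2]
  linarith [key]

lemma hd_Psi {u : ℝ} (h1 : 0 < u) (h2 : u < π) :
    HasDerivAt Psi (Real.log (Real.sin u) * Real.sin (4*u)) u := by
  have hs : 0 < Real.sin u := Real.sin_pos_of_pos_of_lt_pi h1 h2
  have d1 : HasDerivAt (fun x => Real.log (Real.sin x) * (Real.sin (2*x)^2/2))
      (Real.cos u / Real.sin u * (Real.sin (2*u)^2/2)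
        + Real.log (Real.sin u) * ((2 * Real.sin (2*u) ^ 1 * (2 * Real.cos (2*u)))/2)) u :=
    (hd_logsin hs.ne').mul (((hd_sin_mul 2 u).pow 2).div_const 2)
  have d2 : HasDerivAt (fun x => (Real.sin x^4 - 2*Real.sin x^2)/2)
      ((4 * Real.sin u ^ 3 * Real.cos u - 2 * (2 * Real.sin u ^ 1 * Real.cos u))/2) u := by
    have h4 := (Real.hasDerivAt_sin u).pow 4
    have h5 := ((Real.hasDerivAt_sin u).pow 2).const_mul 2
    exact (h4.sub h5).div_const 2
  have key2 : Real.sin (4*u) = 2 * Real.sin (2*u) * Real.cos (2*u) := by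
    rw [show (4:ℝ)*u = 2*(2*u) by ring, Real.sin_two_mul]
  have pyth := Real.sin_sq_add_cos_sq u
  have h3 := d1.add d2
  refine h3.congr_deriv (Eq.symm ?_)
  rw [key2, Real.sin_two_mul u, Real.cos_two_mul u]
  have hne := hs.ne'
  field_simp
  linear_combination (-4 * Real.cos u) * pyth

/-! ### Continuity at the endpoint 0 -/

lemma tendsto_sinlog :
    Tendsto (fun u => Real.log (Real.sin u) * Real.sin u) (𝓝[>] (0:ℝ)) (𝓝 0) := by
  have h1 : Tendsto (fun x : ℝ => Real.log x * x) (𝓝[>] (0:ℝ)) (𝓝 0) := by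
    have h := tendsto_log_mul_rpow_nhdsGT_zero one_pos
    simpa [Real.rpow_one] using h
  have h2 : Tendsto Real.sin (𝓝[>] (0:ℝ)) (𝓝[>] (0:ℝ)) := by
    apply tendsto_nhdsWithin_of_tendsto_nhds_of_eventually_within
    · have := (Real.continuous_sin.tendsto 0).mono_left (nhdsWithin_le_nhds (s := Ioi (0:ℝ)))
      simpa using this
    · filter_upwards [Ioo_mem_nhdsGT_of_mem (Set.mem_Ico.mpr ⟨le_rfl, Real.pi_pos⟩)] with u hu
      exact Real.sin_pos_of_pos_of_lt_pi hu.1 hu.2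
  exact h1.comp h2

lemma continuousOn_logsin_mul {g : ℝ → ℝ} (hg : Continuous g) (hg0 : g 0 = 0)
    (hbd : ∀ᶠ u in 𝓝[>] (0:ℝ), |g u| ≤ 8 * Real.sin u) {b : ℝ} (hb : b < π) :
    ContinuousOn (fun u => Real.log (Real.sin u) * g u) (Icc 0 b) := by
  intro u hu
  rcases eq_or_lt_of_le hu.1 with heq | hpos
  · subst heq
    rw [← continuousWithinAt_diff_self]
    have hsub : Icc (0:ℝ) b \ {0} ⊆ Ioi 0 := fun x hx => lt_of_le_of_ne hx.1.1 (Ne.symm hx.2)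
    have hlim : Tendsto (fun u => Real.log (Real.sin u) * g u) (𝓝[>] (0:ℝ)) (𝓝 0) := by
      have hb2 : ∀ᶠ x in 𝓝[>] (0:ℝ), ‖Real.log (Real.sin x) * g x‖
          ≤ 8 * ‖Real.log (Real.sin x) * Real.sin x‖ := by
        filter_upwards [hbd, Ioo_mem_nhdsGT_of_mem (Set.mem_Ico.mpr ⟨le_rfl, Real.pi_pos⟩)]
          with x hx hx2
        have hsn : 0 < Real.sin x := Real.sin_pos_of_pos_of_lt_pi hx2.1 hx2.2
        rw [Real.norm_eq_abs, abs_mul]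
        calc abs (Real.log (Real.sin x)) * abs (g x)
            ≤ abs (Real.log (Real.sin x)) * (8 * Real.sin x) :=
              mul_le_mul_of_nonneg_left hx (abs_nonneg _)
          _ = 8 * ‖Real.log (Real.sin x) * Real.sin x‖ := by
              rw [Real.norm_eq_abs, abs_mul, abs_of_pos hsn]; ring
      have ht2 : Tendsto (fun x => 8 * ‖Real.log (Real.sin x) * Real.sin x‖) (𝓝[>] (0:ℝ)) (𝓝 0) := by
        have := tendsto_sinlog.norm.const_mul (8:ℝ)
        simpa using this
      exact squeeze_zero_norm' hb2 ht2
    have hf0 : Real.log (Real.sin 0) * g 0 = 0 := by simp [hg0]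
    rw [ContinuousWithinAt, hf0]
    exact hlim.mono_left (nhdsWithin_mono _ hsub)
  · apply ContinuousAt.continuousWithinAt
    have hs : 0 < Real.sin u := Real.sin_pos_of_pos_of_lt_pi hpos (lt_of_le_of_lt hu.2 hb)
    exact (Real.continuous_sin.continuousAt.log hs.ne').mul hg.continuousAt

lemma continuousOn_Phi {b : ℝ} (hb : b < π) : ContinuousOn Phi (Icc 0 b) := by
  apply ContinuousOn.sub
  · apply continuousOn_logsin_mul (by continuity) (by simp) ?_ hb
    filter_upwards [Ioo_mem_nhdsGT_of_mem (Set.mem_Ico.mpr ⟨le_rfl, one_pos⟩)] with u hu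
    have h1 : |Real.sin (4*u)/4| ≤ u := by
      rw [abs_div, abs_of_pos (by norm_num : (0:ℝ) < 4)]
      have := Real.abs_sin_le_abs (x := 4*u)
      rw [abs_of_pos (by linarith [hu.1] : (0:ℝ) < 4*u)] at this
      linarith
    have h2 := sin_ge_half hu.1 hu.2.le
    obtain ⟨hu1, hu2⟩ := hu
    linarith
  · exact (Continuous.continuousOn (by fun_prop))

lemma continuousOn_Psi {b : ℝ} (hb : b < π) : ContinuousOn Psi (Icc 0 b) := by
  apply ContinuousOn.add
  · apply continuousOn_logsin_mul (by continuity) (by simp) ?_ hb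
    filter_upwards [Ioo_mem_nhdsGT_of_mem (Set.mem_Ico.mpr ⟨le_rfl, one_pos⟩)] with u hu
    have h0 : |Real.sin (2*u)| ≤ 1 := abs_le.mpr ⟨Real.neg_one_le_sin _, Real.sin_le_one _⟩
    have h1 : |Real.sin (2*u)| ≤ 2*u := by
      have := Real.abs_sin_le_abs (x := 2*u)
      rwa [abs_of_pos (by linarith [hu.1] : (0:ℝ) < 2*u)] at this
    have h2 := sin_ge_half hu.1 hu.2.le
    have h3 : |Real.sin (2*u)^2/2| ≤ u := by
      rw [abs_div, abs_of_pos (by norm_num : (0:ℝ) < 2), abs_pow]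
      nlinarith [abs_nonneg (Real.sin (2*u))]
    obtain ⟨hu1, hu2⟩ := hu
    linarith
  · exact (Continuous.continuousOn (by fun_prop))

/-! ### FTC evaluations from 0 -/

lemma Phi_zero : Phi 0 = 0 := by simp [Phi]

lemma Psi_zero : Psi 0 = 0 := by simp [Psi]

lemma integral_Phi {b : ℝ} (hb0 : 0 ≤ b) (hbπ : b < π) :
    ∫ u in (0:ℝ)..b, Real.log (Real.sin u) * Real.cos (4*u) = Phi b := by
  have hInt : IntervalIntegrable (fun u => Real.log (Real.sin u) * Real.cos (4*u)) volume 0 b :=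
    il_logsin_mul hb0 hbπ.le (Continuous.measurable (by fun_prop)) (fun x => Real.abs_cos_le_one _)
  rw [intervalIntegral.integral_eq_sub_of_hasDeriv_right_of_le hb0 (continuousOn_Phi hbπ)
    (fun u hu => (hd_Phi hu.1 (hu.2.trans hbπ)).hasDerivWithinAt) hInt, Phi_zero, sub_zero]

lemma integral_Psi {b : ℝ} (hb0 : 0 ≤ b) (hbπ : b < π) :
    ∫ u in (0:ℝ)..b, Real.log (Real.sin u) * Real.sin (4*u) = Psi b := by
  have hInt : IntervalIntegrable (fun u => Real.log (Real.sin u) * Real.sin (4*u)) volume 0 b :=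
    il_logsin_mul hb0 hbπ.le (Continuous.measurable (by fun_prop)) (fun x => Real.abs_sin_le_one _)
  rw [intervalIntegral.integral_eq_sub_of_hasDeriv_right_of_le hb0 (continuousOn_Psi hbπ)
    (fun u hu => (hd_Psi hu.1 (hu.2.trans hbπ)).hasDerivWithinAt) hInt, Psi_zero, sub_zero]


/-! ### The main trigonometric integral -/

lemma sin_sq_half (x : ℝ) : Real.sin x ^ 2 = 1/2 - Real.cos (2*x)/2 := by
  rw [Real.sin_sq, Real.cos_sq]; ring

lemma trig_main {α : ℝ} (hα0 : 0 < α) (hαπ : α < π) :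
    ∫ θ in (0:ℝ)..π, Real.log |2*Real.cos α - 2*Real.cos θ| * Real.sin θ^2
      = π/4 * Real.cos (2*α) := by
  have hπ := Real.pi_pos
  -- Step 1 : decompose the logarithm a.e.
  have hdecomp : ∫ θ in (0:ℝ)..π, Real.log |2*Real.cos α - 2*Real.cos θ| * Real.sin θ^2
      = ∫ θ in (0:ℝ)..π, (Real.log 4 + Real.log (Real.sin ((θ+α)/2))
          + Real.log |Real.sin ((θ-α)/2)|) * Real.sin θ^2 := by
    apply intervalIntegral.integral_congr_ae
    have hae : ∀ᵐ θ : ℝ ∂volume, θ ≠ α := by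
      filter_upwards [compl_mem_ae_iff.mpr (measure_singleton (α : ℝ))] with x hx
      simpa using hx
    filter_upwards [hae] with θ hne hmem
    rw [Set.uIoc_of_le hπ.le] at hmem
    obtain ⟨h0, hpi⟩ := hmem
    have hsp : 0 < Real.sin ((θ+α)/2) :=
      Real.sin_pos_of_pos_of_lt_pi (by linarith) (by linarith)
    have hq : Real.sin ((θ-α)/2) ≠ 0 := by
      intro h
      have h3 := (Real.sin_eq_zero_iff_of_lt_of_lt (by linarith) (by linarith)).mp h
      exact hne (by linarith)
    have hfact : 2*Real.cos α - 2*Real.cos θ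
        = 4 * Real.sin ((θ+α)/2) * Real.sin ((θ-α)/2) := by
      have e1 : α = (θ+α)/2 - (θ-α)/2 := by ring
      have e2 : θ = (θ+α)/2 + (θ-α)/2 := by ring
      calc 2*Real.cos α - 2*Real.cos θ
          = 2*Real.cos ((θ+α)/2 - (θ-α)/2) - 2*Real.cos ((θ+α)/2 + (θ-α)/2) := by
            rw [← e1, ← e2]
        _ = 4 * Real.sin ((θ+α)/2) * Real.sin ((θ-α)/2) := by
            rw [Real.cos_sub, Real.cos_add]; ring
    rw [hfact]
    congr 1
    rw [abs_mul, abs_mul, abs_of_nonneg (by norm_num : (0:ℝ) ≤ 4), abs_of_pos hsp,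
      Real.log_mul (by positivity) (abs_ne_zero.mpr hq),
      Real.log_mul (by norm_num) hsp.ne']
  -- integrability of the three pieces
  have i1 : IntervalIntegrable (fun θ => Real.log 4 * Real.sin θ^2) volume 0 π :=
    (continuous_const.mul ((Real.continuous_sin).pow 2)).intervalIntegrable 0 π
  have i2 : IntervalIntegrable
      (fun θ => Real.log (Real.sin ((θ+α)/2)) * Real.sin θ^2) volume 0 π := by
    apply ContinuousOn.intervalIntegrable
    apply ContinuousOn.mul
    · apply ContinuousOn.log
      · exact (Real.continuous_sin.comp (by fun_prop)).continuousOn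
      · intro θ hθ
        rw [Set.uIcc_of_le hπ.le] at hθ
        exact (Real.sin_pos_of_pos_of_lt_pi (by linarith [hθ.1]) (by linarith [hθ.2])).ne'
    · exact ((Real.continuous_sin).pow 2).continuousOn
  have base3 : IntervalIntegrable (fun θ => Real.log |Real.sin ((θ-α)/2)| * Real.sin θ^2)
      volume 0 π := by
    have hA : IntervalIntegrable (fun u => Real.log |Real.sin u| * Real.sin (2*u+α)^2)
        volume (-(α/2)) ((π-α)/2) := by
      refine il_logabssin_mul ?_ ?_ (Continuous.measurable (by fun_prop)) ?_
      · rw [abs_of_nonpos (by linarith)]; linarith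
      · rw [abs_of_nonneg (by linarith)]; linarith
      · intro x
        rw [abs_of_nonneg (sq_nonneg _)]
        exact Real.sin_sq_le_one _
    have hB := (hA.comp_mul_right (c := 2⁻¹)).comp_sub_right α
    rw [show -(α/2) / 2⁻¹ + α = (0:ℝ) by ring, show ((π-α)/2) / 2⁻¹ + α = π by ring] at hB
    have hfun : (fun x => Real.log |Real.sin ((x - α) * 2⁻¹)|
          * Real.sin (2*((x - α) * 2⁻¹)+α)^2)
        = fun θ => Real.log |Real.sin ((θ-α)/2)| * Real.sin θ^2 := by
      funext θ
      rw [show (θ - α) * 2⁻¹ = (θ-α)/2 by ring, show 2*((θ-α)/2)+α = θ by ring]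
    rw [hfun] at hB
    exact hB
  -- split the integral
  have hsplit : ∫ θ in (0:ℝ)..π, (Real.log 4 + Real.log (Real.sin ((θ+α)/2))
        + Real.log |Real.sin ((θ-α)/2)|) * Real.sin θ^2
      = (∫ θ in (0:ℝ)..π, Real.log 4 * Real.sin θ^2)
        + (∫ θ in (0:ℝ)..π, Real.log (Real.sin ((θ+α)/2)) * Real.sin θ^2)
        + (∫ θ in (0:ℝ)..π, Real.log |Real.sin ((θ-α)/2)| * Real.sin θ^2) := by
    simp_rw [add_mul]
    rw [intervalIntegral.integral_add (i1.add i2) base3, intervalIntegral.integral_add i1 i2]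
  -- first piece
  have hsin2 : ∫ θ in (0:ℝ)..π, Real.sin θ^2 = π/2 := by
    rw [integral_sin_sq]; simp
  have hT0 : ∫ θ in (0:ℝ)..π, Real.log 4 * Real.sin θ^2 = Real.log 4 * (π/2) := by
    rw [intervalIntegral.integral_const_mul, hsin2]
  -- second piece : substitution u = (θ+α)/2
  have hTp : ∫ θ in (0:ℝ)..π, Real.log (Real.sin ((θ+α)/2)) * Real.sin θ^2
      = 2 * ∫ u in (α/2)..((π+α)/2), Real.log (Real.sin u) * Real.sin (2*u-α)^2 := by
    have hcv := intervalIntegral.integral_comp_mul_add (a := (0:ℝ)) (b := π)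
      (fun u => Real.log (Real.sin u) * Real.sin (2*u-α)^2)
      (by norm_num : (2:ℝ)⁻¹ ≠ 0) (α/2)
    rw [show (2:ℝ)⁻¹*0 + α/2 = α/2 by ring, show (2:ℝ)⁻¹*π + α/2 = (π+α)/2 by ring] at hcv
    have hfun : (fun x : ℝ => Real.log (Real.sin ((2:ℝ)⁻¹*x + α/2))
          * Real.sin (2*((2:ℝ)⁻¹*x + α/2)-α)^2)
        = fun θ => Real.log (Real.sin ((θ+α)/2)) * Real.sin θ^2 := by
      funext θ
      rw [show (2:ℝ)⁻¹*θ + α/2 = (θ+α)/2 by ring, show 2*((θ+α)/2)-α = θ by ring]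
    rw [hfun] at hcv
    rw [hcv, smul_eq_mul]
    norm_num
  -- third piece : substitution u = (θ-α)/2 and reflection
  have hTm : ∫ θ in (0:ℝ)..π, Real.log |Real.sin ((θ-α)/2)| * Real.sin θ^2
      = 2 * ((∫ v in (0:ℝ)..(α/2), Real.log |Real.sin (-v)| * Real.sin (2*(-v)+α)^2)
          + ∫ u in (0:ℝ)..((π-α)/2), Real.log |Real.sin u| * Real.sin (2*u+α)^2) := by
    have hcv := intervalIntegral.integral_comp_mul_add (a := (0:ℝ)) (b := π)
      (fun u => Real.log |Real.sin u| * Real.sin (2*u+α)^2)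
      (by norm_num : (2:ℝ)⁻¹ ≠ 0) (-(α/2))
    rw [show (2:ℝ)⁻¹*0 + -(α/2) = -(α/2) by ring,
      show (2:ℝ)⁻¹*π + -(α/2) = (π-α)/2 by ring] at hcv
    have hfun : (fun x : ℝ => Real.log |Real.sin ((2:ℝ)⁻¹*x + -(α/2))|
          * Real.sin (2*((2:ℝ)⁻¹*x + -(α/2))+α)^2)
        = fun θ => Real.log |Real.sin ((θ-α)/2)| * Real.sin θ^2 := by
      funext θ
      rw [show (2:ℝ)⁻¹*θ + -(α/2) = (θ-α)/2 by ring, show 2*((θ-α)/2)+α = θ by ring]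
    rw [hfun] at hcv
    rw [hcv, smul_eq_mul]
    have hIa : IntervalIntegrable (fun u => Real.log |Real.sin u| * Real.sin (2*u+α)^2)
        volume (-(α/2)) 0 := by
      refine il_logabssin_mul ?_ (by simp [hπ.le]) (Continuous.measurable (by fun_prop)) ?_
      · rw [abs_of_nonpos (by linarith)]; linarith
      · intro x; rw [abs_of_nonneg (sq_nonneg _)]; exact Real.sin_sq_le_one _
    have hIb : IntervalIntegrable (fun u => Real.log |Real.sin u| * Real.sin (2*u+α)^2)
        volume 0 ((π-α)/2) := by
      refine il_logabssin_mul (by simp [hπ.le]) ?_ (Continuous.measurable (by fun_prop)) ?_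
      · rw [abs_of_nonneg (by linarith)]; linarith
      · intro x; rw [abs_of_nonneg (sq_nonneg _)]; exact Real.sin_sq_le_one _
    rw [← intervalIntegral.integral_add_adjacent_intervals hIa hIb]
    have hneg := intervalIntegral.integral_comp_neg (a := (0:ℝ)) (b := α/2)
      (fun u => Real.log |Real.sin u| * Real.sin (2*u+α)^2)
    rw [neg_zero] at hneg
    rw [← hneg]
    norm_num
  -- evaluate T₊
  have hb1a : (0:ℝ) ≤ (π+α)/2 := by linarith
  have hb1b : (π+α)/2 < π := by linarith
  have ha1a : (0:ℝ) ≤ α/2 := by linarith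
  have ha1b : α/2 < π := by linarith
  have hb2a : (0:ℝ) ≤ (π-α)/2 := by linarith
  have hb2b : (π-α)/2 < π := by linarith
  -- generic : rewrite integrand on an interval inside [0, π]
  have hexpand : ∀ u : ℝ, Real.log (Real.sin u) * Real.sin (2*u-α)^2
      = (1/2) * Real.log (Real.sin u)
        - (Real.cos (2*α)/2) * (Real.log (Real.sin u) * Real.cos (4*u))
        - (Real.sin (2*α)/2) * (Real.log (Real.sin u) * Real.sin (4*u)) := by
    intro u
    rw [sin_sq_half, show 2*(2*u-α) = 4*u - 2*α by ring, Real.cos_sub]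
    ring
  have hexpand2 : ∀ u : ℝ, Real.log (Real.sin u) * Real.sin (2*u+α)^2
      = (1/2) * Real.log (Real.sin u)
        - (Real.cos (2*α)/2) * (Real.log (Real.sin u) * Real.cos (4*u))
        + (Real.sin (2*α)/2) * (Real.log (Real.sin u) * Real.sin (4*u)) := by
    intro u
    rw [sin_sq_half, show 2*(2*u+α) = 4*u + 2*α by ring, Real.cos_add]
    ring
  -- integrability pieces on subintervals of [0, π]
  have ilog : ∀ b : ℝ, 0 ≤ b → b ≤ π →
      IntervalIntegrable (fun u => (1/2) * Real.log (Real.sin u)) volume 0 b := by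
    intro b h1 h2
    exact (il_logsin_interval le_rfl hπ.le h1 h2).const_mul _
  have icos : ∀ b : ℝ, 0 ≤ b → b ≤ π → IntervalIntegrable
      (fun u => (Real.cos (2*α)/2) * (Real.log (Real.sin u) * Real.cos (4*u))) volume 0 b := by
    intro b h1 h2
    exact (il_logsin_mul h1 h2 (Continuous.measurable (by fun_prop))
      (fun x => Real.abs_cos_le_one _)).const_mul _
  have isin : ∀ b : ℝ, 0 ≤ b → b ≤ π → IntervalIntegrable
      (fun u => (Real.sin (2*α)/2) * (Real.log (Real.sin u) * Real.sin (4*u))) volume 0 b := by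
    intro b h1 h2
    exact (il_logsin_mul h1 h2 (Continuous.measurable (by fun_prop))
      (fun x => Real.abs_sin_le_one _)).const_mul _
  -- value of the expanded integral from 0 to b
  have hval : ∀ b : ℝ, 0 ≤ b → b < π →
      ∫ u in (0:ℝ)..b, ((1/2) * Real.log (Real.sin u)
        - (Real.cos (2*α)/2) * (Real.log (Real.sin u) * Real.cos (4*u))
        - (Real.sin (2*α)/2) * (Real.log (Real.sin u) * Real.sin (4*u)))
      = (1/2) * (∫ u in (0:ℝ)..b, Real.log (Real.sin u))
        - (Real.cos (2*α)/2) * Phi b - (Real.sin (2*α)/2) * Psi b := by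
    intro b h1 h2
    rw [intervalIntegral.integral_sub ((ilog b h1 h2.le).sub (icos b h1 h2.le)) (isin b h1 h2.le),
      intervalIntegral.integral_sub (ilog b h1 h2.le) (icos b h1 h2.le),
      intervalIntegral.integral_const_mul, intervalIntegral.integral_const_mul,
      intervalIntegral.integral_const_mul, integral_Phi h1 h2, integral_Psi h1 h2]
  have hval2 : ∀ b : ℝ, 0 ≤ b → b < π →
      ∫ u in (0:ℝ)..b, ((1/2) * Real.log (Real.sin u)
        - (Real.cos (2*α)/2) * (Real.log (Real.sin u) * Real.cos (4*u))
        + (Real.sin (2*α)/2) * (Real.log (Real.sin u) * Real.sin (4*u)))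
      = (1/2) * (∫ u in (0:ℝ)..b, Real.log (Real.sin u))
        - (Real.cos (2*α)/2) * Phi b + (Real.sin (2*α)/2) * Psi b := by
    intro b h1 h2
    rw [intervalIntegral.integral_add ((ilog b h1 h2.le).sub (icos b h1 h2.le)) (isin b h1 h2.le),
      intervalIntegral.integral_sub (ilog b h1 h2.le) (icos b h1 h2.le),
      intervalIntegral.integral_const_mul, intervalIntegral.integral_const_mul,
      intervalIntegral.integral_const_mul, integral_Phi h1 h2, integral_Psi h1 h2]
  -- T₊ value
  have hTpv : ∫ u in (α/2)..((π+α)/2), Real.log (Real.sin u) * Real.sin (2*u-α)^2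
      = ((1/2) * (∫ u in (0:ℝ)..((π+α)/2), Real.log (Real.sin u))
          - (Real.cos (2*α)/2) * Phi ((π+α)/2) - (Real.sin (2*α)/2) * Psi ((π+α)/2))
        - ((1/2) * (∫ u in (0:ℝ)..(α/2), Real.log (Real.sin u))
          - (Real.cos (2*α)/2) * Phi (α/2) - (Real.sin (2*α)/2) * Psi (α/2)) := by
    have hI1 : IntervalIntegrable
        (fun u => Real.log (Real.sin u) * Real.sin (2*u-α)^2) volume 0 ((π+α)/2) := by
      refine il_logsin_mul hb1a hb1b.le (Continuous.measurable (by fun_prop)) ?_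
      intro x; rw [abs_of_nonneg (sq_nonneg _)]; exact Real.sin_sq_le_one _
    have hI2 : IntervalIntegrable
        (fun u => Real.log (Real.sin u) * Real.sin (2*u-α)^2) volume 0 (α/2) :=
      hI1.mono_set (by
        rw [Set.uIcc_of_le ha1a, Set.uIcc_of_le hb1a]
        exact Set.Icc_subset_Icc le_rfl (by linarith))
    rw [← intervalIntegral.integral_interval_sub_left hI1 hI2]
    have e1 : ∫ u in (0:ℝ)..((π+α)/2), Real.log (Real.sin u) * Real.sin (2*u-α)^2
        = (1/2) * (∫ u in (0:ℝ)..((π+α)/2), Real.log (Real.sin u))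
          - (Real.cos (2*α)/2) * Phi ((π+α)/2) - (Real.sin (2*α)/2) * Psi ((π+α)/2) := by
      rw [← hval _ hb1a hb1b]
      exact intervalIntegral.integral_congr (fun u _ => hexpand u)
    have e2 : ∫ u in (0:ℝ)..(α/2), Real.log (Real.sin u) * Real.sin (2*u-α)^2
        = (1/2) * (∫ u in (0:ℝ)..(α/2), Real.log (Real.sin u))
          - (Real.cos (2*α)/2) * Phi (α/2) - (Real.sin (2*α)/2) * Psi (α/2) := by
      rw [← hval _ ha1a ha1b]
      exact intervalIntegral.integral_congr (fun u _ => hexpand u)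
    rw [e1, e2]
  -- T₋ pieces
  have hTm1 : ∫ v in (0:ℝ)..(α/2), Real.log |Real.sin (-v)| * Real.sin (2*(-v)+α)^2
      = (1/2) * (∫ u in (0:ℝ)..(α/2), Real.log (Real.sin u))
        - (Real.cos (2*α)/2) * Phi (α/2) - (Real.sin (2*α)/2) * Psi (α/2) := by
    rw [← hval _ ha1a ha1b]
    apply intervalIntegral.integral_congr
    intro v hv
    rw [Set.uIcc_of_le ha1a] at hv
    have hsv : (0:ℝ) ≤ Real.sin v :=
      Real.sin_nonneg_of_nonneg_of_le_pi hv.1 (by linarith [hv.2])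
    simp only [Real.sin_neg, abs_neg]
    rw [abs_of_nonneg hsv, sin_sq_half, show 2*(2*(-v)+α) = -(4*v - 2*α) by ring,
      Real.cos_neg, Real.cos_sub]
    ring
  have hTm2 : ∫ u in (0:ℝ)..((π-α)/2), Real.log |Real.sin u| * Real.sin (2*u+α)^2
      = (1/2) * (∫ u in (0:ℝ)..((π-α)/2), Real.log (Real.sin u))
        - (Real.cos (2*α)/2) * Phi ((π-α)/2) + (Real.sin (2*α)/2) * Psi ((π-α)/2) := by
    rw [← hval2 _ hb2a hb2b]
    apply intervalIntegral.integral_congr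
    intro u hu
    rw [Set.uIcc_of_le hb2a] at hu
    have hsu : (0:ℝ) ≤ Real.sin u :=
      Real.sin_nonneg_of_nonneg_of_le_pi hu.1 (by linarith [hu.2])
    simp only []
    rw [abs_of_nonneg hsu, hexpand2]
  -- F-identity : F(b1) + F(b2) = -π log 2
  have hFsum : (∫ u in (0:ℝ)..((π+α)/2), Real.log (Real.sin u))
      + (∫ u in (0:ℝ)..((π-α)/2), Real.log (Real.sin u)) = -(π * Real.log 2) := by
    have hrefl : ∫ u in (0:ℝ)..((π-α)/2), Real.log (Real.sin u)
        = ∫ u in ((π+α)/2)..π, Real.log (Real.sin u) := by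
      have h := intervalIntegral.integral_comp_sub_left (a := (π+α)/2) (b := π)
        (fun u => Real.log (Real.sin u)) π
      simp only [Real.sin_pi_sub] at h
      rw [show π - π = (0:ℝ) by ring, show π - (π+α)/2 = (π-α)/2 by ring] at h
      exact h.symm
    rw [hrefl, intervalIntegral.integral_add_adjacent_intervals
      (il_logsin_interval le_rfl hπ.le hb1a hb1b.le)
      (il_logsin_interval hb1a hb1b.le hπ.le le_rfl), integral_logsin_pi]
  -- Phi values
  have hPhiSum : Phi ((π+α)/2) + Phi ((π-α)/2) = -(π/4) := by
    unfold Phi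
    rw [show 4*((π+α)/2) = 2*α + 2*π by ring, show 4*((π-α)/2) = -(2*α) + 2*π by ring,
      Real.sin_add_two_pi, Real.sin_add_two_pi, Real.sin_neg,
      show 2*((π+α)/2) = α + π by ring, Real.sin_add_pi,
      show 2*((π-α)/2) = π - α by ring, Real.sin_pi_sub,
      show (π+α)/2 = π/2 + α/2 by ring, show (π-α)/2 = π/2 - α/2 by ring,
      Real.sin_pi_div_two_sub]
    simp only [Real.sin_add, Real.sin_pi_div_two, Real.cos_pi_div_two, one_mul, zero_mul,
      add_zero]
    ring
  have hPsiEq : Psi ((π+α)/2) = Psi ((π-α)/2) := by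
    unfold Psi
    rw [show 2*((π+α)/2) = α + π by ring, Real.sin_add_pi,
      show 2*((π-α)/2) = π - α by ring, Real.sin_pi_sub,
      show (π+α)/2 = π/2 + α/2 by ring, show (π-α)/2 = π/2 - α/2 by ring,
      Real.sin_pi_div_two_sub]
    simp only [Real.sin_add, Real.sin_pi_div_two, Real.cos_pi_div_two, one_mul, zero_mul,
      add_zero]
    ring
  have hlog4 : Real.log 4 = 2 * Real.log 2 := by
    rw [show (4:ℝ) = 2^2 by norm_num, Real.log_pow]
    norm_num
  -- final assembly
  rw [hdecomp, hsplit, hT0, hTp, hTm, hTpv, hTm1, hTm2]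
  linear_combination (π/2) * hlog4 + hFsum - Real.cos (2*α) * hPhiSum
    - Real.sin (2*α) * hPsiEq


/-! ### The density -/

lemma rho_nonneg (x : ℝ) : 0 ≤ rho x := by
  unfold rho; positivity

lemma rho_cont : Continuous rho := by
  unfold rho
  exact continuous_const.mul (Real.continuous_sqrt.comp (by fun_prop))

lemma rho_zero {y : ℝ} (hy : y ∉ Ioo (-2:ℝ) 2) : rho y = 0 := by
  unfold rho
  have h : (4:ℝ) - y^2 ≤ 0 := by
    rcases not_and_or.mp hy with h | h
    · push_neg at h; nlinarith
    · push_neg at h; nlinarith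
  rw [Real.sqrt_eq_zero_of_nonpos h, mul_zero]

lemma rho_le (x : ℝ) : rho x ≤ 1/π := by
  unfold rho
  have h1 : Real.sqrt (4 - x^2) ≤ 2 := by
    rw [show (2:ℝ) = Real.sqrt (2^2) from (Real.sqrt_sq (by norm_num)).symm]
    apply Real.sqrt_le_sqrt
    nlinarith [sq_nonneg x]
  have h2 : (0:ℝ) < π := Real.pi_pos
  calc 1 / (2*π) * Real.sqrt (4 - x^2) ≤ 1 / (2*π) * 2 := by
        apply mul_le_mul_of_nonneg_left h1 (by positivity)
    _ = 1/π := by field_simp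
  
lemma sc_integral (g : ℝ → ℝ) :
    ∫ y, g y ∂semicircleLaw = ∫ y, rho y * g y := by
  rw [show semicircleLaw
      = (volume : Measure ℝ).withDensity (fun x => ((rho x).toNNReal : ℝ≥0∞)) from rfl]
  have hm : Measurable (fun x : ℝ => (rho x).toNNReal) :=
    measurable_real_toNNReal.comp rho_cont.measurable
  rw [integral_withDensity_eq_integral_smul hm g]
  congr 1
  funext y
  rw [NNReal.smul_def, Real.coe_toNNReal _ (rho_nonneg y), smul_eq_mul]

instance : IsFiniteMeasure semicircleLaw := by
  rw [semicircleLaw_eq]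
  apply isFiniteMeasure_withDensity
  have hle : ∀ x : ℝ, ENNReal.ofReal (rho x)
      ≤ (Icc (-2:ℝ) 2).indicator (fun _ => ENNReal.ofReal (1/π)) x := by
    intro x
    by_cases hx : x ∈ Icc (-2:ℝ) 2
    · rw [Set.indicator_of_mem hx]
      exact ENNReal.ofReal_le_ofReal (rho_le x)
    · rw [Set.indicator_of_notMem hx, rho_zero (fun hmem => hx (Ioo_subset_Icc_self hmem))]
      simp
  have hb : ∫⁻ x, ENNReal.ofReal (rho x) ∂(volume : Measure ℝ)
      ≤ ENNReal.ofReal (1/π) * volume (Icc (-2:ℝ) 2) := by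
    calc ∫⁻ x, ENNReal.ofReal (rho x) ∂(volume : Measure ℝ)
        ≤ ∫⁻ x, (Icc (-2:ℝ) 2).indicator (fun _ => ENNReal.ofReal (1/π)) x ∂volume :=
          lintegral_mono hle
      _ = ENNReal.ofReal (1/π) * volume (Icc (-2:ℝ) 2) := by
          rw [lintegral_indicator measurableSet_Icc, setLIntegral_const]
  refine ne_top_of_le_ne_top ?_ hb
  rw [Real.volume_Icc]
  exact ENNReal.mul_ne_top ENNReal.ofReal_ne_top ENNReal.ofReal_ne_top

lemma sc_ae_Ioo : ∀ᵐ x ∂semicircleLaw, x ∈ Ioo (-2:ℝ) 2 := by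
  rw [ae_iff]
  have hset : {x : ℝ | ¬x ∈ Ioo (-2:ℝ) 2} = (Ioo (-2:ℝ) 2)ᶜ := rfl
  rw [hset, semicircleLaw_eq, withDensity_apply _ measurableSet_Ioo.compl]
  have h0 : ∀ᵐ x ∂((volume : Measure ℝ).restrict (Ioo (-2:ℝ) 2)ᶜ),
      ENNReal.ofReal (rho x) = 0 := by
    filter_upwards [ae_restrict_mem measurableSet_Ioo.compl] with x hx
    rw [rho_zero hx]
    simp
  rw [lintegral_congr_ae h0, lintegral_zero]

/-! ### Substitution to trigonometric form -/

lemma image_cos : (fun θ : ℝ => 2 * Real.cos θ) '' (Ioo 0 π) = Ioo (-2:ℝ) 2 := by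
  ext x
  constructor
  · rintro ⟨θ, hθ, rfl⟩
    have h0 : (0:ℝ) ∈ Icc (0:ℝ) π := ⟨le_rfl, Real.pi_pos.le⟩
    have hπ : π ∈ Icc (0:ℝ) π := ⟨Real.pi_pos.le, le_rfl⟩
    have hθ' : θ ∈ Icc (0:ℝ) π := ⟨hθ.1.le, hθ.2.le⟩
    have h1 : Real.cos θ < Real.cos 0 := Real.strictAntiOn_cos h0 hθ' hθ.1
    have h2 : Real.cos π < Real.cos θ := Real.strictAntiOn_cos hθ' hπ hθ.2
    rw [Real.cos_zero] at h1
    rw [Real.cos_pi] at h2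
    dsimp only
    constructor <;> nlinarith
  · intro hx
    refine ⟨Real.arccos (x/2), ⟨?_, ?_⟩, ?_⟩
    · exact Real.arccos_pos.mpr (by linarith [hx.2])
    · refine lt_of_le_of_ne (Real.arccos_le_pi _) (fun h => ?_)
      have := Real.arccos_eq_pi.mp h
      linarith [hx.1]
    · show 2 * Real.cos (Real.arccos (x/2)) = x
      rw [Real.cos_arccos (by linarith [hx.1] : (-1:ℝ) ≤ x/2) (by linarith [hx.2] : x/2 ≤ 1)]
      ring

lemma inj_cos : Set.InjOn (fun θ : ℝ => 2 * Real.cos θ) (Ioo 0 π) := by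
  intro a ha b hb h
  have : Real.cos a = Real.cos b := by dsimp at h; linarith
  exact Real.injOn_cos ⟨ha.1.le, ha.2.le⟩ ⟨hb.1.le, hb.2.le⟩ this

lemma potential {x : ℝ} (hx : x ∈ Ioo (-2:ℝ) 2) :
    ∫ y, Real.log |x - y| ∂semicircleLaw = x^2/4 - 1/2 := by
  have hπ := Real.pi_pos
  rw [sc_integral (fun y => Real.log |x - y|)]
  rw [← setIntegral_eq_integral_of_forall_compl_eq_zero
      (s := Ioo (-2:ℝ) 2) (f := fun y => rho y * Real.log |x - y|)
      (fun y hy => by rw [rho_zero hy, zero_mul])]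
  rw [← image_cos, integral_image_eq_integral_abs_deriv_smul measurableSet_Ioo
      (fun θ _ => ((Real.hasDerivAt_cos θ).const_mul 2).hasDerivWithinAt) inj_cos]
  rw [setIntegral_congr_fun measurableSet_Ioo
      (g := fun θ => (2/π) * (Real.log |x - 2*Real.cos θ| * Real.sin θ^2)) (by
    intro θ hθ
    have hs : 0 < Real.sin θ := Real.sin_pos_of_pos_of_lt_pi hθ.1 hθ.2
    have pyth := Real.sin_sq_add_cos_sq θ
    have harg : (4:ℝ) - (2*Real.cos θ)^2 = (2*Real.sin θ)^2 := by linear_combination (-4:ℝ)*pyth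
    dsimp only
    rw [abs_mul, abs_neg, abs_of_pos hs, abs_of_pos (by norm_num : (0:ℝ) < 2)]
    unfold rho
    rw [show x - (2*Real.cos θ) = x - 2*Real.cos θ by ring]
    rw [harg, Real.sqrt_sq (by positivity), smul_eq_mul]
    field_simp)]
  rw [MeasureTheory.integral_const_mul, ← integral_Ioc_eq_integral_Ioo,
    ← intervalIntegral.integral_of_le hπ.le]
  have hb1 : -1 < x/2 := by have := hx.1; linarith
  have hb2 : x/2 < 1 := by have := hx.2; linarith
  have hα0 : 0 < Real.arccos (x/2) := Real.arccos_pos.mpr hb2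
  have hαπ : Real.arccos (x/2) < π := by
    refine lt_of_le_of_ne (Real.arccos_le_pi _) (fun h => ?_)
    have := Real.arccos_eq_pi.mp h
    linarith
  have hcosα : 2*Real.cos (Real.arccos (x/2)) = x := by
    rw [Real.cos_arccos hb1.le hb2.le]; ring
  rw [← hcosα, trig_main hα0 hαπ, Real.cos_two_mul]
  field_simp
  ring

/-! ### The moments -/

lemma sqrt4 : Real.sqrt 4 = 2 := by
  rw [show (4:ℝ) = 2^2 by norm_num, Real.sqrt_sq (by norm_num : (0:ℝ) ≤ 2)]

lemma sqrt_aux {x : ℝ} (h4 : (0:ℝ) < 4 - x^2) :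
    Real.sqrt (1 - (x/2)^2) = Real.sqrt (4 - x^2) / 2 := by
  rw [show 1 - (x/2)^2 = (4 - x^2) * (1/2)^2 by ring, Real.sqrt_mul h4.le,
    Real.sqrt_sq (by norm_num : (0:ℝ) ≤ 1/2)]
  ring

lemma hd_sqrt4 {x : ℝ} (h4 : (0:ℝ) < 4 - x^2) :
    HasDerivAt (fun x : ℝ => Real.sqrt (4 - x^2)) (-x / Real.sqrt (4 - x^2)) x := by
  have d_inner : HasDerivAt (fun x : ℝ => 4 - x^2) (-(2*x)) x := by
    have := (hasDerivAt_pow 2 x).const_sub 4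
    simpa using this
  have h := (Real.hasDerivAt_sqrt h4.ne').comp x d_inner
  refine h.congr_deriv (Eq.symm ?_)
  have hS : 0 < Real.sqrt (4 - x^2) := Real.sqrt_pos.mpr h4
  field_simp

lemma hd_arcsin2 {x : ℝ} (h1 : -2 < x) (h2 : x < 2) :
    HasDerivAt (fun x : ℝ => 2 * Real.arcsin (x/2)) (2 / Real.sqrt (4 - x^2)) x := by
  have hd := (Real.hasDerivAt_arcsin
    (by intro h; rw [div_eq_iff (by norm_num : (2:ℝ) ≠ 0)] at h; simp only [id_eq] at h; linarith)
    (by intro h; rw [div_eq_iff (by norm_num : (2:ℝ) ≠ 0)] at h; simp only [id_eq] at h; linarith)).comp x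
    ((hasDerivAt_id x).div_const 2)
  have h := hd.const_mul 2
  simp only [Function.comp, id_eq] at h
  refine h.congr_deriv (Eq.symm ?_)
  have h4 : (0:ℝ) < 4 - x^2 := by nlinarith
  have hS : 0 < Real.sqrt (4 - x^2) := Real.sqrt_pos.mpr h4
  rw [sqrt_aux h4]
  field_simp

lemma ftc0 : ∫ x in (-2:ℝ)..2, Real.sqrt (4 - x^2) = 2*π := by
  have hcont : ContinuousOn (fun x : ℝ => x/2 * Real.sqrt (4 - x^2) + 2 * Real.arcsin (x/2))
      (Icc (-2:ℝ) 2) := by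
    apply Continuous.continuousOn
    exact ((continuous_id.div_const 2).mul (Real.continuous_sqrt.comp (by fun_prop))).add
      (continuous_const.mul (Real.continuous_arcsin.comp (continuous_id.div_const 2)))
  have hderiv : ∀ x ∈ Ioo (-2:ℝ) 2, HasDerivAt
      (fun x : ℝ => x/2 * Real.sqrt (4 - x^2) + 2 * Real.arcsin (x/2))
      (Real.sqrt (4 - x^2)) x := by
    intro x hx
    have h4 : (0:ℝ) < 4 - x^2 := by nlinarith [hx.1, hx.2]
    have hS : 0 < Real.sqrt (4 - x^2) := Real.sqrt_pos.mpr h4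
    have hsq : Real.sqrt (4 - x^2)^2 = 4 - x^2 := Real.sq_sqrt h4.le
    have h := (((hasDerivAt_id x).div_const 2).mul (hd_sqrt4 h4)).add (hd_arcsin2 hx.1 hx.2)
    refine h.congr_deriv (Eq.symm ?_)
    field_simp
    simp only [id_eq]
    linear_combination hsq
  have hint : IntervalIntegrable (fun x : ℝ => Real.sqrt (4 - x^2)) volume (-2) 2 :=
    ((Real.continuous_sqrt.comp (by fun_prop)).intervalIntegrable _ _)
  rw [intervalIntegral.integral_eq_sub_of_hasDeriv_right_of_le (by norm_num) hcont
    (fun x hx => (hderiv x hx).hasDerivWithinAt) hint]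
  norm_num
  ring

lemma ftc2 : ∫ x in (-2:ℝ)..2, Real.sqrt (4 - x^2) * x^2 = 2*π := by
  have hcont : ContinuousOn
      (fun x : ℝ => (x^3 - 2*x)/4 * Real.sqrt (4 - x^2) + 2 * Real.arcsin (x/2))
      (Icc (-2:ℝ) 2) := by
    apply Continuous.continuousOn
    exact ((((continuous_pow 3).sub (continuous_const.mul continuous_id)).div_const 4).mul
      (Real.continuous_sqrt.comp (by fun_prop))).add
      (continuous_const.mul (Real.continuous_arcsin.comp (continuous_id.div_const 2)))
  have hderiv : ∀ x ∈ Ioo (-2:ℝ) 2, HasDerivAt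
      (fun x : ℝ => (x^3 - 2*x)/4 * Real.sqrt (4 - x^2) + 2 * Real.arcsin (x/2))
      (Real.sqrt (4 - x^2) * x^2) x := by
    intro x hx
    have h4 : (0:ℝ) < 4 - x^2 := by nlinarith [hx.1, hx.2]
    have hS : 0 < Real.sqrt (4 - x^2) := Real.sqrt_pos.mpr h4
    have hsq : Real.sqrt (4 - x^2)^2 = 4 - x^2 := Real.sq_sqrt h4.le
    have hpoly : HasDerivAt (fun x : ℝ => (x^3 - 2*x)/4) ((3*x^2 - 2)/4) x := by
      have := ((hasDerivAt_pow 3 x).sub ((hasDerivAt_id x).const_mul 2)).div_const 4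
      refine this.congr_deriv (Eq.symm ?_)
      simp
    have h := (hpoly.mul (hd_sqrt4 h4)).add (hd_arcsin2 hx.1 hx.2)
    refine h.congr_deriv (Eq.symm ?_)
    field_simp
    linear_combination (x^2 + 2) * hsq
  have hint : IntervalIntegrable (fun x : ℝ => Real.sqrt (4 - x^2) * x^2) volume (-2) 2 :=
    (((Real.continuous_sqrt.comp (by fun_prop)).mul (continuous_pow 2)).intervalIntegrable _ _)
  rw [intervalIntegral.integral_eq_sub_of_hasDeriv_right_of_le (by norm_num) hcont
    (fun x hx => (hderiv x hx).hasDerivWithinAt) hint]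
  norm_num
  ring


/-! ### Integrability on the product -/

lemma integrable_inner (x : ℝ) :
    Integrable (fun y => Real.log |x - y| * rho y) (volume : Measure ℝ) := by
  have hsupp : Function.support (fun y => Real.log |x - y| * rho y) ⊆ Icc (-2:ℝ) 2 := by
    intro y hy
    by_contra hy2
    have h0 : rho y = 0 := rho_zero (fun hmem => hy2 (Ioo_subset_Icc_self hmem))
    exact hy (by simp [h0])
  rw [← integrableOn_iff_integrable_of_support_subset hsupp]
  have hbase : IntegrableOn (fun y => abs (Real.log (abs (x - y)))) (Icc (-2:ℝ) 2) volume := by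
    have h := (il_logabs_shift x (-2) 2).abs
    rwa [intervalIntegrable_iff_integrableOn_Icc_of_le (by norm_num)] at h
  refine Integrable.mono' (hbase.const_mul (1/π)) ?_ ?_
  · exact ((Real.measurable_log.comp
      ((continuous_abs.comp (continuous_const.sub continuous_id)).measurable)).mul
      rho_cont.measurable).aestronglyMeasurable
  · filter_upwards with y
    rw [Real.norm_eq_abs, abs_mul, abs_of_nonneg (rho_nonneg y)]
    calc abs (Real.log (abs (x - y))) * rho y ≤ abs (Real.log (abs (x - y))) * (1/π) :=
          mul_le_mul_of_nonneg_left (rho_le y) (abs_nonneg _)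
      _ = 1/π * abs (Real.log (abs (x - y))) := mul_comm _ _

lemma integrable_sc (x : ℝ) :
    Integrable (fun y => Real.log |x - y|) semicircleLaw := by
  rw [semicircleLaw_eq, integrable_withDensity_iff (rho_cont.measurable.ennreal_ofReal)
    (Filter.Eventually.of_forall (fun y => ENNReal.ofReal_lt_top))]
  have hsimp : (fun y => Real.log |x - y| * (ENNReal.ofReal (rho y)).toReal)
      = fun y => Real.log |x - y| * rho y :=
    funext fun y => by rw [ENNReal.toReal_ofReal (rho_nonneg y)]
  rw [hsimp]
  exact integrable_inner x

lemma norm_potential_bound {x : ℝ} (hx : x ∈ Icc (-2:ℝ) 2) :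
    (∫ y, ‖Real.log |x - y|‖ ∂semicircleLaw)
      ≤ (1/π) * ∫ t in (-4:ℝ)..4, abs (Real.log (abs t)) := by
  rw [sc_integral (fun y => ‖Real.log |x - y|‖)]
  have hres : ∫ y, rho y * ‖Real.log |x-y|‖
      = ∫ y in Icc (-2:ℝ) 2, rho y * ‖Real.log |x-y|‖ :=
    (setIntegral_eq_integral_of_forall_compl_eq_zero (fun y hy => by
      rw [rho_zero (fun hmem => hy (Ioo_subset_Icc_self hmem)), zero_mul])).symm
  rw [hres]
  have hbase : IntegrableOn (fun y => abs (Real.log (abs (x - y)))) (Icc (-2:ℝ) 2) volume := by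
    have h := (il_logabs_shift x (-2) 2).abs
    rwa [intervalIntegrable_iff_integrableOn_Icc_of_le (by norm_num)] at h
  have hIL : IntegrableOn (fun y => rho y * ‖Real.log |x-y|‖) (Icc (-2:ℝ) 2) volume := by
    refine Integrable.mono' (hbase.const_mul (1/π)) ?_ ?_
    · exact (rho_cont.measurable.mul (Real.measurable_log.comp
        ((continuous_abs.comp (continuous_const.sub continuous_id)).measurable)).norm).aestronglyMeasurable
    · filter_upwards with y
      rw [Real.norm_eq_abs, abs_mul, abs_of_nonneg (rho_nonneg y), Real.norm_eq_abs, abs_abs]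
      calc rho y * abs (Real.log (abs (x - y))) ≤ (1/π) * abs (Real.log (abs (x - y))) :=
            mul_le_mul_of_nonneg_right (rho_le y) (abs_nonneg _)
        _ = 1/π * abs (Real.log (abs (x - y))) := rfl
  have step1 : ∫ y in Icc (-2:ℝ) 2, rho y * ‖Real.log |x-y|‖
      ≤ ∫ y in Icc (-2:ℝ) 2, (1/π) * abs (Real.log (abs (x - y))) := by
    refine setIntegral_mono_on hIL (hbase.const_mul (1/π)) measurableSet_Icc ?_
    intro y _
    rw [Real.norm_eq_abs]
    exact mul_le_mul_of_nonneg_right (rho_le y) (abs_nonneg _)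
  refine le_trans step1 ?_
  rw [MeasureTheory.integral_const_mul]
  have hπinv : (0:ℝ) ≤ 1/π := by positivity
  apply mul_le_mul_of_nonneg_left _ hπinv
  -- ∫ y in Icc, |log |x−y|| ≤ ∫ t in −4..4, |log |t||
  have e1 : ∫ y in Icc (-2:ℝ) 2, abs (Real.log (abs (x - y)))
      = ∫ y in (-2:ℝ)..2, abs (Real.log (abs (x - y))) := by
    rw [integral_Icc_eq_integral_Ioc, intervalIntegral.integral_of_le (by norm_num : (-2:ℝ) ≤ 2)]
  have e2 : ∫ y in (-2:ℝ)..2, abs (Real.log (abs (x - y)))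
      = ∫ t in (x-2)..(x+2), abs (Real.log (abs t)) := by
    have h := intervalIntegral.integral_comp_sub_left (a := (-2:ℝ)) (b := 2)
      (fun t => abs (Real.log (abs t))) x
    rw [show x - 2 = x - 2 by ring, show x - (-2:ℝ) = x + 2 by ring] at h
    exact h
  rw [e1, e2]
  have hx1 : -4 ≤ x - 2 := by linarith [hx.1]
  have hx2 : x - 2 ≤ x + 2 := by linarith
  have hx3 : x + 2 ≤ 4 := by linarith [hx.2]
  have hi : ∀ a b : ℝ, IntervalIntegrable (fun t => abs (Real.log (abs t))) volume a b := by
    intro a b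
    have h := (il_logabs_shift 0 a b).abs
    have hfun : (fun y => abs (Real.log (abs (0 - y)))) = fun t => abs (Real.log (abs t)) := by
      funext t; rw [zero_sub, abs_neg]
    rwa [hfun] at h
  have hs1 := intervalIntegral.integral_add_adjacent_intervals (hi (-4) (x-2)) (hi (x-2) 4)
  have hs2 := intervalIntegral.integral_add_adjacent_intervals (hi (x-2) (x+2)) (hi (x+2) 4)
  have hnn1 : 0 ≤ ∫ t in (-4:ℝ)..(x-2), abs (Real.log (abs t)) :=
    intervalIntegral.integral_nonneg hx1 (fun t _ => abs_nonneg _)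
  have hnn2 : 0 ≤ ∫ t in (x+2)..(4:ℝ), abs (Real.log (abs t)) :=
    intervalIntegral.integral_nonneg hx3 (fun t _ => abs_nonneg _)
  linarith

lemma integrable_prod_log :
    Integrable (fun z : ℝ × ℝ => Real.log |z.1 - z.2|)
      (semicircleLaw.prod semicircleLaw) := by
  have hmeas : AEStronglyMeasurable (fun z : ℝ × ℝ => Real.log |z.1 - z.2|)
      (semicircleLaw.prod semicircleLaw) :=
    (Real.measurable_log.comp
      ((continuous_abs.comp (continuous_fst.sub continuous_snd)).measurable)).aestronglyMeasurable
  rw [MeasureTheory.integrable_prod_iff hmeas]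
  constructor
  · exact Filter.Eventually.of_forall (fun x => integrable_sc x)
  · set C := (1/π) * ∫ t in (-4:ℝ)..4, abs (Real.log (abs t)) with hC
    refine Integrable.mono' (integrable_const C) (hmeas.norm.integral_prod_right') ?_
    filter_upwards [sc_ae_Ioo] with x hx
    rw [Real.norm_eq_abs, abs_of_nonneg (integral_nonneg (fun y => norm_nonneg _))]
    exact norm_potential_bound (Ioo_subset_Icc_self hx)


end SemicircleProof

/-- The logarithmic energy of the standard semicircular law equals `-1/4`;
equivalently the free entropy `χ(σ)` equals `(1/2)·log(2πe)`. -/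
theorem semicircle_log_energy :
    (∫ z : ℝ × ℝ, Real.log |z.1 - z.2| ∂(semicircleLaw.prod semicircleLaw)) = -(1 / 4)
    ∧ (∫ z : ℝ × ℝ, Real.log |z.1 - z.2| ∂(semicircleLaw.prod semicircleLaw))
        + 3 / 4 + 1 / 2 * Real.log (2 * Real.pi)
      = 1 / 2 * Real.log (2 * Real.pi * Real.exp 1) := by
  have hπ := Real.pi_pos
  have h1 : (∫ z : ℝ × ℝ, Real.log |z.1 - z.2| ∂(semicircleLaw.prod semicircleLaw))
      = -(1/4) := by
    rw [MeasureTheory.integral_prod _ SemicircleProof.integrable_prod_log]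
    have hae2 : (fun x => ∫ y, Real.log |x - y| ∂semicircleLaw)
        =ᵐ[semicircleLaw] (fun x => x^2/4 - 1/2) := by
      filter_upwards [SemicircleProof.sc_ae_Ioo] with x hx
      exact SemicircleProof.potential hx
    rw [MeasureTheory.integral_congr_ae hae2, SemicircleProof.sc_integral (fun x => x^2/4 - 1/2)]
    rw [← setIntegral_eq_integral_of_forall_compl_eq_zero
      (s := Set.Ioo (-2:ℝ) 2) (f := fun x => SemicircleProof.rho x * (x^2/4 - 1/2))
      (fun y hy => by rw [SemicircleProof.rho_zero hy, zero_mul])]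
    rw [← MeasureTheory.integral_Ioc_eq_integral_Ioo,
      ← intervalIntegral.integral_of_le (by norm_num : (-2:ℝ) ≤ 2)]
    have hI1 : IntervalIntegrable (fun x : ℝ => (1/(8*π)) * (Real.sqrt (4-x^2) * x^2))
        volume (-2) 2 :=
      ((continuous_const.mul ((Real.continuous_sqrt.comp (by fun_prop)).mul
        (continuous_pow 2))).intervalIntegrable _ _)
    have hI2 : IntervalIntegrable (fun x : ℝ => (1/(4*π)) * Real.sqrt (4-x^2))
        volume (-2) 2 :=
      ((continuous_const.mul (Real.continuous_sqrt.comp (by fun_prop))).intervalIntegrable _ _)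
    have hsplitv : ∫ x in (-2:ℝ)..2, SemicircleProof.rho x * (x^2/4 - 1/2)
        = (1/(8*π)) * (∫ x in (-2:ℝ)..2, Real.sqrt (4-x^2) * x^2)
          - (1/(4*π)) * (∫ x in (-2:ℝ)..2, Real.sqrt (4-x^2)) := by
      rw [← intervalIntegral.integral_const_mul, ← intervalIntegral.integral_const_mul,
        ← intervalIntegral.integral_sub hI1 hI2]
      apply intervalIntegral.integral_congr
      intro x _
      show SemicircleProof.rho x * (x^2/4 - 1/2) = _
      unfold SemicircleProof.rho
      field_simp
      ring
    rw [hsplitv, SemicircleProof.ftc0, SemicircleProof.ftc2]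
    field_simp
    ring
  refine ⟨h1, ?_⟩
  rw [h1, Real.log_mul (by positivity) (Real.exp_ne_zero 1), Real.log_exp]
  ring
end

section
/- One-dimensional form of the paper's proposition that monotone transformations increase relative free entropy: let V be a convex real polynomial and let ν be a compactly supported Borel probability measure on ℝ with ∫∫ |log|x−y|| dν(x)dν(y) < ∞ whose law is the free Gibbs state with potential V, i.e. ∫ V'(x)·p(x) dν(x) = ∫∫ Δp(x,y) dν(x)dν(y) for every real polynomial p. Let F be a real polynomial with F'(x) > 0 for all x ∈ ℝ (so F is a strictly increasing bijection of ℝ). Then ∫ V(F(x)) dν(x) − ∫∫ log|F(x) − F(y)| dν(x)dν(y) ≥ ∫ V(x) dν(x) − ∫∫ log|x − y| dν(x)dν(y); that is, the relative free entropy of the pushforward F_*ν with respect to V is at least that of ν. -/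
open MeasureTheory Real

/-- The difference-quotient kernel of a real polynomial:
`dq p x y = (p(x) - p(y))/(x - y)` for `x ≠ y`, and `p'(x)` on the diagonal. -/
noncomputable def dq (p : Polynomial ℝ) (x y : ℝ) : ℝ :=
  if x = y then (Polynomial.derivative p).eval x
  else (p.eval x - p.eval y) / (x - y)

namespace FreeEntropyAux

open Polynomial Set


open Polynomial Set

lemma dq_symm (p : ℝ[X]) (x y : ℝ) : dq p x y = dq p y x := by
  unfold dq
  rcases eq_or_ne x y with h | h
  · subst h; simp
  · rw [if_neg h, if_neg (Ne.symm h), ← neg_div_neg_eq]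
    ring_nf

lemma dq_sub (p q : ℝ[X]) (x y : ℝ) : dq (p - q) x y = dq p x y - dq q x y := by
  unfold dq
  split <;> simp [sub_div]
  ring

lemma dq_X (x y : ℝ) : dq Polynomial.X x y = 1 := by
  unfold dq
  split
  · simp
  · rw [Polynomial.eval_X, Polynomial.eval_X, div_self (sub_ne_zero.mpr (by assumption))]

lemma dq_measurable (p : ℝ[X]) : Measurable (fun z : ℝ × ℝ => dq p z.1 z.2) := by
  unfold dq
  apply Measurable.ite
  · exact measurableSet_eq_fun measurable_fst measurable_snd
  · exact ((p.derivative.continuous.comp continuous_fst)).measurable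
  · exact (((p.continuous.comp continuous_fst).sub
      (p.continuous.comp continuous_snd)).measurable).div
      ((continuous_fst.sub continuous_snd)).measurable

lemma dq_mul_sub (p : ℝ[X]) (x y : ℝ) : p.eval x - p.eval y = dq p x y * (x - y) := by
  unfold dq
  rcases eq_or_ne x y with h | h
  · subst h; simp
  · rw [if_neg h, div_mul_cancel₀ _ (sub_ne_zero.mpr h)]

/-- Mean value theorem bound: if `p'` is in `[lo, hi]` on a convex set `s`, then
so is every difference quotient of `p` with both points in `s`. -/
lemma dq_mem_of_bounds {p : ℝ[X]} {lo hi : ℝ} {s : Set ℝ} (hs : Convex ℝ s)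
    (h : ∀ t ∈ s, (Polynomial.derivative p).eval t ∈ Set.Icc lo hi) :
    ∀ x ∈ s, ∀ y ∈ s, dq p x y ∈ Set.Icc lo hi := by
  have aux : ∀ x ∈ s, ∀ y ∈ s, x < y → dq p x y ∈ Set.Icc lo hi := by
    intro x hx y hy hxy
    obtain ⟨c, hc, hceq⟩ := exists_hasDerivAt_eq_slope (fun t => p.eval t)
      (fun t => p.derivative.eval t) hxy (p.continuous.continuousOn)
      (fun t _ => p.hasDerivAt t)
    have hcs : c ∈ s := hs.ordConnected.out hx hy (Ioo_subset_Icc_self hc)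
    have : dq p x y = p.derivative.eval c := by
      unfold dq
      rw [if_neg hxy.ne, hceq, ← neg_div_neg_eq]
      ring_nf
    rw [this]
    exact h c hcs
  intro x hx y hy
  rcases lt_trichotomy x y with hxy | hxy | hxy
  · exact aux x hx y hy hxy
  · subst hxy
    unfold dq; rw [if_pos rfl]; exact h x hx
  · rw [dq_symm]; exact aux y hy x hx hxy

noncomputable def antideriv (p : ℝ[X]) : ℝ[X] :=
  p.sum fun n a => Polynomial.C (a / (n + 1)) * Polynomial.X ^ (n + 1)

lemma derivative_antideriv (p : ℝ[X]) : Polynomial.derivative (antideriv p) = p := by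
  unfold antideriv
  rw [Polynomial.sum, map_sum]
  conv_rhs => rw [← Polynomial.sum_C_mul_X_pow_eq p]
  rw [Polynomial.sum]
  apply Finset.sum_congr rfl
  intro n _
  rw [Polynomial.derivative_C_mul_X_pow, Nat.add_sub_cancel]
  congr 2
  push_cast
  field_simp

/-- A measurable function bounded on a co-null set is integrable (finite measure). -/
lemma integrable_of_bound {α : Type*} [MeasurableSpace α] (μ : Measure α) [IsFiniteMeasure μ]
    {S : Set α} (hS : μ Sᶜ = 0) {f : α → ℝ} (hf : AEStronglyMeasurable f μ) {C : ℝ}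
    (hC : ∀ x ∈ S, |f x| ≤ C) : Integrable f μ := by
  have hae : ∀ᵐ x ∂μ, x ∈ S := by
    rw [ae_iff]
    exact hS
  exact Integrable.mono' (integrable_const C) hf
    (hae.mono fun x hx => by simpa [Real.norm_eq_abs] using hC x hx)

lemma prodnull (ν : Measure ℝ) [IsProbabilityMeasure ν] {K : Set ℝ} (hKn : ν Kᶜ = 0) :
    (ν.prod ν) (K ×ˢ K)ᶜ = 0 := by
  have hsub : (K ×ˢ K)ᶜ ⊆ (Kᶜ ×ˢ Set.univ) ∪ (Set.univ ×ˢ Kᶜ) := by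
    intro z hz
    simp only [Set.mem_compl_iff, Set.mem_prod, not_and_or] at hz
    rcases hz with h | h
    · exact Or.inl ⟨h, Set.mem_univ _⟩
    · exact Or.inr ⟨Set.mem_univ _, h⟩
  refine measure_mono_null hsub (measure_union_null ?_ ?_) <;>
    rw [Measure.prod_prod] <;> simp [hKn]

lemma ae_mem_of_null_compl {α : Type*} [MeasurableSpace α] (μ : Measure α) {S : Set α}
    (hS : μ Sᶜ = 0) : ∀ᵐ x ∂μ, x ∈ S := by
  rw [ae_iff]; exact hS

set_option maxHeartbeats 1000000 in
lemma noatom (V : ℝ[X]) (ν : Measure ℝ) [IsProbabilityMeasure ν]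
    {K : Set ℝ} (hKc : IsCompact K) (hKn : ν Kᶜ = 0)
    (hGibbs : ∀ p : ℝ[X],
      ∫ x, (Polynomial.derivative V).eval x * p.eval x ∂ν
        = ∫ z : ℝ × ℝ, dq p z.1 z.2 ∂(ν.prod ν)) (a : ℝ) : ν {a} = 0 := by
  by_cases haK : a ∈ K
  case neg =>
    exact measure_mono_null (by simpa using haK) hKn
  -- setup: bounding interval
  obtain ⟨r0, hr0⟩ := hKc.isBounded.subset_closedBall 0
  set B : ℝ := max r0 |a| with hBdef
  have hB0 : 0 ≤ B := le_trans (abs_nonneg a) (le_max_right _ _)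
  have hr0B : r0 ≤ B := le_max_left _ _
  have hKB : K ⊆ Set.Icc (-B) B := by
    intro x hx
    have hx' := hr0 hx
    rw [Real.closedBall_eq_Icc] at hx'
    obtain ⟨h1, h2⟩ := hx'
    constructor <;> simp only [zero_sub, zero_add] at h1 h2 <;> linarith
  have haI : a ∈ Set.Icc (-B) B := by
    constructor
    · linarith [neg_abs_le a, neg_le_neg (le_max_right r0 |a|)]
    · exact le_trans (le_abs_self a) (le_max_right _ _)
  set L : ℝ := 2 * B + 1 with hLdef
  have hL : 0 < L := by positivity
  set U : ℝ[X] := 1 - Polynomial.C (1/L^2) * (Polynomial.X - Polynomial.C a)^2 with hUdef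
  have hUeval : ∀ t : ℝ, U.eval t = 1 - (t - a)^2 / L^2 := by
    intro t; simp [hUdef]; ring
  have hU01 : ∀ t ∈ Set.Icc (-B) B, U.eval t ∈ Set.Icc (0:ℝ) 1 := by
    intro t ht
    rw [hUeval]
    have h1 : |t - a| ≤ 2 * B := by
      rw [abs_sub_le_iff]
      constructor <;> [skip; skip] <;>
        · have := ht.1; have := ht.2; have := haI.1; have := haI.2; linarith
    have h2 : (t - a)^2 ≤ L^2 := by
      have : |t - a| ≤ L := by simp only [hLdef]; linarith
      nlinarith [abs_nonneg (t - a), sq_abs (t - a)]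
    constructor
    · have := sq_nonneg (t-a); rw [sub_nonneg, div_le_one (by positivity)]; exact h2
    · have : 0 ≤ (t - a)^2 / L^2 := by positivity
      linarith
  set m : ℝ := (ν {a}).toReal with hmdef
  have hm0 : 0 ≤ m := ENNReal.toReal_nonneg
  -- main estimate
  have key : ∀ ε > (0:ℝ), m^2 ≤ ε := by
    intro ε hε
    -- sup of |V'| on the interval
    obtain ⟨z0, hz0, hz0max'⟩ := (isCompact_Icc (a := -B) (b := B)).exists_isMaxOn ⟨a, haI⟩
      ((continuous_abs.comp V.derivative.continuous).continuousOn)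
    have hz0max : ∀ t ∈ Set.Icc (-B) B, |(Polynomial.derivative V).eval t|
        ≤ |(Polynomial.derivative V).eval z0| := fun t ht => hz0max' ht
    set CV : ℝ := |(Polynomial.derivative V).eval z0| with hCVdef
    have hCV0 : 0 ≤ CV := abs_nonneg _
    set δ : ℝ := min L (ε / (2 * (CV + 1))) with hδdef
    have hδpos : 0 < δ := lt_min hL (by positivity)
    have hδL : δ ≤ L := min_le_left _ _
    have hδε : δ ≤ ε / (2 * (CV + 1)) := min_le_right _ _
    set rr : ℝ := 1 - (δ/L)^2 with hrrdef
    have hrr0 : 0 ≤ rr := by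
      have : (δ/L)^2 ≤ 1 := by
        rw [sq_le_one_iff_abs_le_one, abs_div, abs_of_pos hδpos, abs_of_pos hL,
          div_le_one hL]
        exact hδL
      simp only [hrrdef]; linarith
    have hrr1 : rr < 1 := by
      have : 0 < (δ/L)^2 := by positivity
      simp only [hrrdef]; linarith
    obtain ⟨n, hn⟩ := exists_pow_lt_of_lt_one
      (show (0:ℝ) < ε / (2 * (CV + 1) * (2*B + 1)) by positivity) hrr1
    set Q : ℝ[X] := U ^ n with hQdef
    set P : ℝ[X] := antideriv Q - Polynomial.C ((antideriv Q).eval a) with hPdef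
    have hP' : Polynomial.derivative P = Q := by
      rw [hPdef, map_sub, derivative_antideriv, Polynomial.derivative_C, sub_zero]
    have hPa : P.eval a = 0 := by simp [hPdef]
    have hQI : ∀ t ∈ Set.Icc (-B) B, Q.eval t ∈ Set.Icc (0:ℝ) 1 := by
      intro t ht
      rw [hQdef, Polynomial.eval_pow]
      obtain ⟨h1, h2⟩ := hU01 t ht
      exact ⟨pow_nonneg h1 n, pow_le_one₀ h1 h2⟩
    have hQa : Q.eval a = 1 := by
      rw [hQdef, Polynomial.eval_pow, hUeval]; simp
    have hdq01 : ∀ x ∈ Set.Icc (-B) B, ∀ y ∈ Set.Icc (-B) B,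
        dq P x y ∈ Set.Icc (0:ℝ) 1 := by
      apply dq_mem_of_bounds (convex_Icc _ _)
      intro t ht; rw [hP']; exact hQI t ht
    -- smallness of P on K
    have hnear : ∀ w ∈ Set.Icc (-B) B, |w - a| ≤ δ → |P.eval w| ≤ δ := by
      intro w hw hwd
      have hmem := hdq01 w hw a haI
      have heq : P.eval w = dq P w a * (w - a) := by
        have h := dq_mul_sub P w a; rw [hPa, sub_zero] at h; exact h
      rw [heq, abs_mul]
      have h1 : |dq P w a| ≤ 1 := abs_le.mpr ⟨by linarith [hmem.1], hmem.2⟩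
      calc |dq P w a| * |w - a| ≤ 1 * δ :=
            mul_le_mul h1 hwd (abs_nonneg _) zero_le_one
        _ = δ := one_mul δ
    have hrn : (0:ℝ) ≤ rr ^ n := pow_nonneg hrr0 n
    have hfarQ : ∀ t ∈ Set.Icc (-B) B, δ ≤ |t - a| →
        Q.eval t ∈ Set.Icc (0:ℝ) (rr ^ n) := by
      intro t ht htd
      rw [hQdef, Polynomial.eval_pow]
      obtain ⟨hU0, _⟩ := hU01 t ht
      have hUr : U.eval t ≤ rr := by
        rw [hUeval, hrrdef, div_pow]
        have h2 : δ^2 ≤ (t - a)^2 := by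
          rw [← sq_abs (t - a)]
          gcongr
        have h3 : δ^2 / L^2 ≤ (t-a)^2 / L^2 := by gcongr
        linarith
      exact ⟨pow_nonneg hU0 n, pow_le_pow_left₀ hU0 hUr n⟩
    have hPsmall : ∀ x ∈ K, |P.eval x| ≤ δ + 2 * B * rr ^ n := by
      intro x hx
      have hxI : x ∈ Set.Icc (-B) B := hKB hx
      rcases le_or_gt |x - a| δ with h | h
      · have := hnear x hxI h
        nlinarith
      · rcases lt_abs.mp h with hgt | hgt
        · -- x > a + δ
          have he : a + δ ∈ Set.Icc (-B) B := ⟨by linarith [haI.1], by linarith [hxI.2]⟩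
          have hderiv : ∀ t ∈ Set.Icc (a+δ) B,
              (Polynomial.derivative P).eval t ∈ Set.Icc (0:ℝ) (rr^n) := by
            intro t ht
            rw [hP']
            refine hfarQ t ⟨by linarith [ht.1, haI.1], ht.2⟩ ?_
            rw [abs_of_nonneg (by linarith [ht.1])]
            linarith [ht.1]
          have hdqf := dq_mem_of_bounds (convex_Icc _ _) hderiv x
            ⟨by linarith, hxI.2⟩ (a+δ) ⟨le_rfl, he.2⟩
          have heq : P.eval x = dq P x (a+δ) * (x - (a+δ)) + P.eval (a+δ) := by
            have h := dq_mul_sub P x (a+δ); linarith [h]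
          have hPe : |P.eval (a+δ)| ≤ δ := by
            refine hnear (a+δ) he ?_
            rw [add_sub_cancel_left, abs_of_nonneg hδpos.le]
          have h1 : |dq P x (a+δ)| ≤ rr^n := abs_le.mpr ⟨by linarith [hdqf.1], hdqf.2⟩
          have h2 : |x - (a+δ)| ≤ 2*B := by
            rw [abs_of_nonneg (by linarith)]
            linarith [hxI.2, he.1]
          calc |P.eval x| ≤ |dq P x (a+δ) * (x - (a+δ))| + |P.eval (a+δ)| := by
                rw [heq]; exact abs_add_le _ _
            _ ≤ rr^n * (2*B) + δ := by
                rw [abs_mul]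
                have := mul_le_mul h1 h2 (abs_nonneg _) hrn
                linarith
            _ = δ + 2*B*rr^n := by ring
        · -- x < a - δ
          have he : a - δ ∈ Set.Icc (-B) B := ⟨by linarith [hxI.1], by linarith [haI.2]⟩
          have hderiv : ∀ t ∈ Set.Icc (-B) (a-δ),
              (Polynomial.derivative P).eval t ∈ Set.Icc (0:ℝ) (rr^n) := by
            intro t ht
            rw [hP']
            refine hfarQ t ⟨ht.1, by linarith [ht.2, haI.2]⟩ ?_
            rw [abs_sub_comm, abs_of_nonneg (by linarith [ht.2])]
            linarith [ht.2]
          have hdqf := dq_mem_of_bounds (convex_Icc _ _) hderiv x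
            ⟨hxI.1, by linarith⟩ (a-δ) ⟨he.1, le_rfl⟩
          have heq : P.eval x = dq P x (a-δ) * (x - (a-δ)) + P.eval (a-δ) := by
            have h := dq_mul_sub P x (a-δ); linarith [h]
          have hPe : |P.eval (a-δ)| ≤ δ := by
            refine hnear (a-δ) he ?_
            rw [sub_sub_cancel_left, abs_neg, abs_of_nonneg hδpos.le]
          have h1 : |dq P x (a-δ)| ≤ rr^n := abs_le.mpr ⟨by linarith [hdqf.1], hdqf.2⟩
          have h2 : |x - (a-δ)| ≤ 2*B := by
            rw [abs_of_nonpos (by linarith)]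
            linarith [hxI.1, he.2]
          calc |P.eval x| ≤ |dq P x (a-δ) * (x - (a-δ))| + |P.eval (a-δ)| := by
                rw [heq]; exact abs_add_le _ _
            _ ≤ rr^n * (2*B) + δ := by
                rw [abs_mul]
                have := mul_le_mul h1 h2 (abs_nonneg _) hrn
                linarith
            _ = δ + 2*B*rr^n := by ring
    -- integral comparison
    have hprodnull := prodnull ν (K := K) hKn
    have haeK2 : ∀ᵐ z ∂ν.prod ν, z ∈ K ×ˢ K := ae_mem_of_null_compl _ hprodnull
    have hint : Integrable (fun z : ℝ × ℝ => dq P z.1 z.2) (ν.prod ν) := by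
      refine integrable_of_bound (ν.prod ν) hprodnull
        ((dq_measurable P).aestronglyMeasurable) (C := 1) ?_
      rintro ⟨x, y⟩ ⟨hx, hy⟩
      have h := hdq01 x (hKB hx) y (hKB hy)
      exact abs_le.mpr ⟨by linarith [h.1], h.2⟩
    have hposae : 0 ≤ᵐ[ν.prod ν] fun z : ℝ × ℝ => dq P z.1 z.2 := by
      filter_upwards [haeK2] with z hz
      exact (hdq01 z.1 (hKB hz.1) z.2 (hKB hz.2)).1
    have hsingle : ∫ z in ({((a:ℝ),(a:ℝ))} : Set (ℝ × ℝ)), dq P z.1 z.2 ∂(ν.prod ν)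
        = m^2 := by
      rw [integral_singleton]
      have h1 : (ν.prod ν) {((a:ℝ),(a:ℝ))} = ν {a} * ν {a} := by
        rw [← Set.singleton_prod_singleton, Measure.prod_prod]
      have h2 : dq P a a = 1 := by unfold dq; rw [if_pos rfl, hP', hQa]
      rw [measureReal_def, h1, h2, ENNReal.toReal_mul]
      simp only [smul_eq_mul, mul_one, hmdef]
      ring
    have hle1 : m^2 ≤ ∫ z : ℝ × ℝ, dq P z.1 z.2 ∂(ν.prod ν) := by
      rw [← hsingle]; exact setIntegral_le_integral hint hposae
    have hle3 : |∫ x, (Polynomial.derivative V).eval x * P.eval x ∂ν|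
        ≤ CV * (δ + 2*B*rr^n) := by
      have h := norm_integral_le_of_norm_le_const (μ := ν)
        (f := fun x => (Polynomial.derivative V).eval x * P.eval x)
        (C := CV * (δ + 2*B*rr^n)) ?_
      · simpa using h
      · filter_upwards [ae_mem_of_null_compl ν hKn] with x hx
        rw [Real.norm_eq_abs, abs_mul]
        exact mul_le_mul (hz0max x (hKB hx)) (hPsmall x hx) (abs_nonneg _) hCV0
    have hfin : m^2 ≤ CV * (δ + 2*B*rr^n) := by
      calc m^2 ≤ ∫ z : ℝ × ℝ, dq P z.1 z.2 ∂(ν.prod ν) := hle1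
        _ = ∫ x, (Polynomial.derivative V).eval x * P.eval x ∂ν := (hGibbs P).symm
        _ ≤ |∫ x, (Polynomial.derivative V).eval x * P.eval x ∂ν| := le_abs_self _
        _ ≤ CV * (δ + 2*B*rr^n) := hle3
    clear_value B L δ rr CV U Q P
    clear hGibbs hKn hKB hU01 hUeval hnear hfarQ hPsmall hdq01 hQI hQa hint hposae
      hsingle hle1 hle3 haeK2 hprodnull hz0max hz0max' hP' hPa hKc hr0 haK haI hz0
      hUdef hQdef hPdef hCVdef hrrdef hδdef hLdef hBdef hmdef hm0 hδL hr0B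
    have h1 : CV * δ ≤ ε/2 := by
      have e1 : (CV+1) * (ε / (2*(CV+1))) = ε/2 := by
        field_simp
      calc CV * δ ≤ (CV+1) * (ε / (2*(CV+1))) :=
            mul_le_mul (by linarith) hδε hδpos.le (by linarith)
        _ = ε/2 := e1
    have h2 : CV * (2*B*rr^n) ≤ ε/2 := by
      have e2 : (CV+1) * ((2*B+1) * (ε / (2*(CV+1)*(2*B+1)))) = ε/2 := by
        field_simp
      have hX : (0:ℝ) < ε / (2*(CV+1)*(2*B+1)) := by positivity
      have ha1 : 2*B*rr^n ≤ (2*B+1) * (ε / (2*(CV+1)*(2*B+1))) :=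
        mul_le_mul (by linarith) hn.le hrn (by linarith)
      calc CV * (2*B*rr^n) ≤ (CV+1) * ((2*B+1) * (ε / (2*(CV+1)*(2*B+1)))) :=
            mul_le_mul (by linarith) ha1 (mul_nonneg (by linarith) hrn) (by linarith)
        _ = ε/2 := e2
    have hsplit : CV*(δ+2*B*rr^n) = CV*δ + CV*(2*B*rr^n) := by ring
    linarith
  -- conclude
  have hm2 : m = 0 := by
    by_contra hne
    have hp : 0 < m^2 := lt_of_le_of_ne (sq_nonneg m) (Ne.symm (pow_ne_zero 2 hne))
    linarith [key (m^2/2) (by linarith)]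
  clear_value m
  rw [hmdef] at hm2
  rcases (ENNReal.toReal_eq_zero_iff _).mp hm2 with h | h
  · exact h
  · exact absurd h (measure_ne_top ν _)

end FreeEntropyAux

open FreeEntropyAux Polynomial

set_option maxHeartbeats 1000000 in
/-- Monotone transformations increase the relative free entropy (one-dimensional form):
if `ν` is the free Gibbs state with convex polynomial potential `V` and `F` is a
polynomial with `F' > 0` everywhere, then the relative free entropy of `F_*ν`
with respect to `V` is at least that of `ν`. -/
theorem monotone_transport_increases_relative_entropy
    (V : Polynomial ℝ) (hV : ConvexOn ℝ Set.univ (fun x => V.eval x))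
    (ν : Measure ℝ) [IsProbabilityMeasure ν]
    (hcpt : ∃ K : Set ℝ, IsCompact K ∧ ν Kᶜ = 0)
    (hlog : Integrable (fun z : ℝ × ℝ => abs (Real.log |z.1 - z.2|)) (ν.prod ν))
    (hGibbs : ∀ p : Polynomial ℝ,
      ∫ x, (Polynomial.derivative V).eval x * p.eval x ∂ν
        = ∫ z : ℝ × ℝ, dq p z.1 z.2 ∂(ν.prod ν))
    (F : Polynomial ℝ) (hF : ∀ x : ℝ, 0 < (Polynomial.derivative F).eval x) :
    (∫ x, V.eval x ∂ν) - (∫ z : ℝ × ℝ, Real.log |z.1 - z.2| ∂(ν.prod ν))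
      ≤ (∫ x, V.eval (F.eval x) ∂ν)
          - (∫ z : ℝ × ℝ, Real.log |F.eval z.1 - F.eval z.2| ∂(ν.prod ν)) := by
  classical
  obtain ⟨K, hKc, hKn⟩ := hcpt
  obtain ⟨r0, hr0⟩ := hKc.isBounded.subset_closedBall 0
  set B : ℝ := max r0 0 with hBdef
  have hB0 : (0:ℝ) ≤ B := le_max_right _ _
  have hKB : K ⊆ Set.Icc (-B) B := by
    intro x hx
    have hx' := hr0 hx
    rw [Real.closedBall_eq_Icc] at hx'
    obtain ⟨h1, h2⟩ := hx'
    have : r0 ≤ B := le_max_left _ _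
    constructor <;> simp only [zero_sub, zero_add] at h1 h2 <;> linarith
  have hIn0 : (0:ℝ) ∈ Set.Icc (-B) B := ⟨by linarith, hB0⟩
  -- strict monotonicity of F
  have hFmono : StrictMono (fun x : ℝ => F.eval x) :=
    strictMono_of_deriv_pos (fun x => by
      rw [Polynomial.deriv]; exact hF x)
  -- dq F is positive everywhere
  have hdqFpos : ∀ x y : ℝ, 0 < dq F x y := by
    have aux : ∀ u v : ℝ, u < v → 0 < dq F u v := by
      intro u v huv
      unfold dq; rw [if_neg huv.ne]
      apply div_pos_iff.mpr
      right
      exact ⟨sub_neg.mpr (hFmono huv), sub_neg.mpr huv⟩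
    intro x y
    rcases lt_trichotomy x y with h|h|h
    · exact aux x y h
    · subst h; unfold dq; rw [if_pos rfl]; exact hF x
    · rw [dq_symm]; exact aux y x h
  -- bounds for dq F on the interval
  obtain ⟨zc, hzcI, hzc⟩ := (isCompact_Icc (a := -B) (b := B)).exists_isMinOn ⟨0, hIn0⟩
    (F.derivative.continuous.continuousOn)
  obtain ⟨zC, hzCI, hzC⟩ := (isCompact_Icc (a := -B) (b := B)).exists_isMaxOn ⟨0, hIn0⟩
    (F.derivative.continuous.continuousOn)
  set c : ℝ := (Polynomial.derivative F).eval zc with hcdef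
  set C : ℝ := (Polynomial.derivative F).eval zC with hCdef
  have hc0 : 0 < c := hF zc
  have hdqmem : ∀ x ∈ Set.Icc (-B) B, ∀ y ∈ Set.Icc (-B) B, dq F x y ∈ Set.Icc c C :=
    dq_mem_of_bounds (convex_Icc _ _) (fun t ht => ⟨hzc ht, hzC ht⟩)
  -- integrability facts
  have haeK2 : ∀ᵐ z ∂ν.prod ν, z ∈ K ×ˢ K := ae_mem_of_null_compl _ (prodnull ν hKn)
  have haeK : ∀ᵐ x ∂ν, x ∈ K := ae_mem_of_null_compl ν hKn
  have i1 : Integrable (fun z : ℝ × ℝ => Real.log |z.1 - z.2|) (ν.prod ν) := by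
    refine hlog.mono' ?_ ?_
    · exact (Real.measurable_log.comp
        ((continuous_fst.sub continuous_snd).measurable.abs)).aestronglyMeasurable
    · filter_upwards with z
      rw [Real.norm_eq_abs]
  have i2 : Integrable (fun z : ℝ × ℝ => Real.log (dq F z.1 z.2)) (ν.prod ν) := by
    refine integrable_of_bound (ν.prod ν) (prodnull ν hKn)
      ((Real.measurable_log.comp (dq_measurable F)).aestronglyMeasurable)
      (C := max |Real.log c| |Real.log C|) ?_
    rintro ⟨x, y⟩ ⟨hx, hy⟩
    obtain ⟨hl, hu⟩ := hdqmem x (hKB hx) y (hKB hy)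
    exact abs_le_max_abs_abs (Real.log_le_log hc0 hl) (Real.log_le_log (lt_of_lt_of_le hc0 hl) hu)
  have i3 : Integrable (fun z : ℝ × ℝ => dq F z.1 z.2) (ν.prod ν) := by
    refine integrable_of_bound (ν.prod ν) (prodnull ν hKn)
      ((dq_measurable F).aestronglyMeasurable) (C := max |c| |C|) ?_
    rintro ⟨x, y⟩ ⟨hx, hy⟩
    obtain ⟨hl, hu⟩ := hdqmem x (hKB hx) y (hKB hy)
    exact abs_le_max_abs_abs hl hu
  have icont : ∀ f : ℝ → ℝ, Continuous f → Integrable f ν := by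
    intro f hf
    obtain ⟨Cf, hCf⟩ := hKc.exists_bound_of_continuousOn hf.continuousOn
    exact integrable_of_bound ν hKn hf.measurable.aestronglyMeasurable
      (fun x hx => by simpa using hCf x hx)
  -- the diagonal is null
  have hdiagnull : (ν.prod ν) {z : ℝ × ℝ | z.1 = z.2} = 0 := by
    have hD : MeasurableSet {z : ℝ × ℝ | z.1 = z.2} :=
      measurableSet_eq_fun measurable_fst measurable_snd
    rw [Measure.prod_apply hD]
    have hz : ∀ x : ℝ, ν {x} = 0 := noatom V ν hKc hKn hGibbs
    simp [hz]
  have hae_ne : ∀ᵐ z ∂ν.prod ν, z.1 ≠ z.2 := by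
    rw [ae_iff]
    simpa using hdiagnull
  -- splitting the log integral
  have hsplit : (fun z : ℝ × ℝ => Real.log |F.eval z.1 - F.eval z.2|)
      =ᵐ[ν.prod ν] fun z => Real.log |z.1 - z.2| + Real.log (dq F z.1 z.2) := by
    filter_upwards [hae_ne] with z hz
    have hzne : z.1 - z.2 ≠ 0 := sub_ne_zero.mpr hz
    have heq : F.eval z.1 - F.eval z.2 = dq F z.1 z.2 * (z.1 - z.2) := dq_mul_sub F z.1 z.2
    rw [heq, abs_mul, abs_of_pos (hdqFpos z.1 z.2),
      Real.log_mul (ne_of_gt (hdqFpos z.1 z.2)) (abs_ne_zero.mpr hzne)]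
    ring
  have e2 : ∫ z : ℝ × ℝ, Real.log |F.eval z.1 - F.eval z.2| ∂(ν.prod ν)
      = (∫ z : ℝ × ℝ, Real.log |z.1 - z.2| ∂(ν.prod ν))
        + ∫ z : ℝ × ℝ, Real.log (dq F z.1 z.2) ∂(ν.prod ν) := by
    rw [integral_congr_ae hsplit, integral_add i1 i2]
  -- log t ≤ t - 1
  have c1 : ∫ z : ℝ × ℝ, Real.log (dq F z.1 z.2) ∂(ν.prod ν)
      ≤ ∫ z : ℝ × ℝ, (dq F z.1 z.2 - 1) ∂(ν.prod ν) := by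
    refine integral_mono i2 (i3.sub (integrable_const 1)) ?_
    intro z
    exact Real.log_le_sub_one_of_pos (hdqFpos z.1 z.2)
  -- Gibbs applied to F - X
  have c2 : ∫ x, (Polynomial.derivative V).eval x * (F.eval x - x) ∂ν
      = ∫ z : ℝ × ℝ, (dq F z.1 z.2 - 1) ∂(ν.prod ν) := by
    have h := hGibbs (F - Polynomial.X)
    simpa only [dq_sub, dq_X, Polynomial.eval_sub, Polynomial.eval_X] using h
  -- convexity inequality
  have hconv : ∀ x : ℝ, (Polynomial.derivative V).eval x * (F.eval x - x)
      ≤ V.eval (F.eval x) - V.eval x := by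
    intro x
    rcases lt_trichotomy (F.eval x) x with h|h|h
    · have hs := hV.slope_le_deriv (Set.mem_univ (F.eval x)) (Set.mem_univ x) h
        (V.differentiableAt)
      rw [slope_def_field, Polynomial.deriv] at hs
      have hpos : 0 < x - F.eval x := by linarith
      have h2 := (div_le_iff₀ hpos).mp hs
      nlinarith
    · rw [h]; simp
    · have hs := hV.deriv_le_slope (Set.mem_univ x) (Set.mem_univ (F.eval x)) h
        (V.differentiableAt)
      rw [slope_def_field, Polynomial.deriv] at hs
      have hpos : 0 < F.eval x - x := by linarith
      have h2 := (le_div_iff₀ hpos).mp hs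
      nlinarith
  have c3 : ∫ x, (Polynomial.derivative V).eval x * (F.eval x - x) ∂ν
      ≤ ∫ x, (V.eval (F.eval x) - V.eval x) ∂ν := by
    refine integral_mono ?_ ?_ hconv
    · exact icont _ ((V.derivative.continuous).mul (F.continuous.sub continuous_id))
    · exact icont _ ((V.continuous.comp F.continuous).sub V.continuous)
  have c4 : ∫ x, (V.eval (F.eval x) - V.eval x) ∂ν
      = (∫ x, V.eval (F.eval x) ∂ν) - ∫ x, V.eval x ∂ν :=
    integral_sub (icont _ (V.continuous.comp F.continuous)) (icont _ V.continuous)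
  linarith [e2, c1, c2, c3, c4]
end
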